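/- arXiv:1802.09639 — 5 statements merged into one kernel-verified Lean document; each statement's English description precedes it below -/
import Mathlib

section
/- Fix an integer M ≥ 1 and an integer window size W ≥ 1, and fix ε > 0. Then the probability that the mass of the unobserved set exceeds the rate of discovery by more than ε satisfies P( π(U_M) − R_{M,W} > ε ) ≤ exp(−W ε² / 2). -/
open MeasureTheory ProbabilityTheory Real

lemma exp_neg_le_quad {t : ℝ} (ht : 0 ≤ t) : Real.exp (-t) ≤ 1 - t + t ^ 2 / 2 := by
  have hderiv : ∀ s : ℝ, HasDerivAt (fun u : ℝ => 1 - u + u ^ 2 / 2 - Real.exp (-u))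
      (s - 1 + Real.exp (-s)) s := by
    intro s
    have h1 : HasDerivAt (fun u : ℝ => Real.exp (-u)) (-Real.exp (-s)) s := by
      have := (hasDerivAt_neg s).exp
      convert this using 1
      ring
    have h2 : HasDerivAt (fun u : ℝ => 1 - u + u ^ 2 / 2)
        (-1 + (2 : ℕ) * s ^ 1 / 2) s := by
      exact (((hasDerivAt_const s (1:ℝ)).sub (hasDerivAt_id s)).add
        ((hasDerivAt_pow 2 s).div_const 2)).congr_deriv (by simp)
    have := h2.sub h1
    refine this.congr_deriv ?_
    push_cast
    ring
  have hmono : Monotone (fun u : ℝ => 1 - u + u ^ 2 / 2 - Real.exp (-u)) := by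
    refine monotone_of_deriv_nonneg (fun s => (hderiv s).differentiableAt) fun s => ?_
    rw [(hderiv s).deriv]
    nlinarith [Real.add_one_le_exp (-s)]
  have := hmono ht
  simp only [neg_zero, Real.exp_zero] at this
  nlinarith [this]

lemma sum_singleton_toReal {B : Type*} [Fintype B] [MeasurableSpace B]
    [MeasurableSingletonClass B] (μ : Measure B) [IsFiniteMeasure μ]
    (T : Set B) [DecidablePred (· ∈ T)] :
    ∑ b : B, (μ {b}).toReal * (if b ∈ T then (1:ℝ) else 0) = (μ T).toReal := by
  classical
  simp_rw [mul_ite, mul_one, mul_zero]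
  rw [← Finset.sum_filter]
  have hμ : μ T = ∑ b ∈ Finset.univ.filter (· ∈ T), μ {b} := by
    rw [← measure_biUnion_finset]
    · congr 1
      ext b
      simp
    · intro a _ b _ hab
      exact Set.disjoint_singleton.mpr hab
    · exact fun b _ => measurableSet_singleton b
  rw [hμ, ENNReal.toReal_sum fun b _ => measure_ne_top μ _]

lemma chernoff_aux {Ω : Type*} [MeasurableSpace Ω] (P : Measure Ω) [IsProbabilityMeasure P]
    {B : Type*} [Fintype B] [MeasurableSpace B] [MeasurableSingletonClass B]
    (μ : Measure B) [IsProbabilityMeasure μ]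
    (ω : ℕ → Ω → B) (hmeas : ∀ i, Measurable (ω i))
    (hindep : iIndepFun ω P)
    (hdist : ∀ i, Measure.map (ω i) P = μ)
    (M W : ℕ) (hW : 1 ≤ W) (ε : ℝ) (hε : 0 < ε)
    (S : Set B) [DecidablePred (· ∈ S)] :
    P {x | (μ S).toReal - (1 / (W : ℝ)) * ∑ i ∈ Finset.Icc (M+1) (M+W),
        (if ω i x ∈ S then (1:ℝ) else 0) > ε}
      ≤ ENNReal.ofReal (Real.exp (-(W:ℝ) * ε ^ 2 / 2)) := by
  classical
  set p := (μ S).toReal with hp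
  have hp0 : 0 ≤ p := ENNReal.toReal_nonneg
  have hp1 : p ≤ 1 := by
    rw [hp]
    calc (μ S).toReal ≤ (1 : ENNReal).toReal := ENNReal.toReal_mono ENNReal.one_ne_top prob_le_one
      _ = 1 := ENNReal.toReal_one
  set s : Finset ℕ := Finset.Icc (M+1) (M+W) with hs
  have hcard : s.card = W := by rw [hs, Nat.card_Icc]; omega
  set X : ℕ → Ω → ℝ := fun i x => p - (if ω i x ∈ S then 1 else 0) with hX
  have hXmeas : ∀ i, Measurable (X i) := fun i =>
    (measurable_of_countable (fun b : B => p - (if b ∈ S then (1:ℝ) else 0))).comp (hmeas i)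
  have hXindep : iIndepFun X P :=
    hindep.comp (fun _ b => p - (if b ∈ S then (1:ℝ) else 0))
      (fun _ => measurable_of_countable _)
  set Z : Ω → ℝ := ∑ i ∈ s, X i with hZ
  have hZapp : ∀ x, Z x = W * p - ∑ i ∈ s, (if ω i x ∈ S then (1:ℝ) else 0) := by
    intro x
    rw [hZ, Finset.sum_apply]
    simp only [hX]
    rw [Finset.sum_sub_distrib, Finset.sum_const, hcard]
    simp [nsmul_eq_mul]
  have hZmeas : Measurable Z := by
    have hzz : Z = fun a => ∑ i ∈ s, X i a := by
      ext a; rw [hZ]; exact Finset.sum_apply _ _ _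
    rw [hzz]
    exact Finset.measurable_sum s (fun i _ => hXmeas i)
  have hXle : ∀ i x, X i x ≤ 1 := by
    intro i x
    rw [hX]
    dsimp only
    split <;> linarith
  have hZle : ∀ x, Z x ≤ W := by
    intro x
    rw [hZ, Finset.sum_apply]
    calc ∑ i ∈ s, X i x ≤ ∑ _i ∈ s, (1:ℝ) := Finset.sum_le_sum fun i _ => hXle i x
      _ = W := by simp [hcard]
  have hint : Integrable (fun x => Real.exp (ε * Z x)) P := by
    refine Integrable.mono' (integrable_const (Real.exp (ε * W)))
      ((hZmeas.const_mul ε).exp.aestronglyMeasurable)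
      (Filter.Eventually.of_forall fun x => ?_)
    rw [Real.norm_eq_abs, Real.abs_exp]
    exact Real.exp_le_exp.mpr (mul_le_mul_of_nonneg_left (hZle x) hε.le)
  have hmgfi : ∀ i ∈ s, mgf (X i) P ε
      = Real.exp (ε * p) * (1 + (Real.exp (-ε) - 1) * p) := by
    intro i _
    have hg : Measurable (fun b : B => Real.exp (ε * (p - (if b ∈ S then (1:ℝ) else 0)))) :=
      measurable_of_countable _
    calc mgf (X i) P ε = ∫ x, Real.exp (ε * X i x) ∂P := rfl
      _ = ∫ b, Real.exp (ε * (p - (if b ∈ S then (1:ℝ) else 0))) ∂μ := by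
          rw [← hdist i, integral_map (hmeas i).aemeasurable hg.aestronglyMeasurable]
      _ = ∑ b : B, (μ {b}).toReal * Real.exp (ε * (p - (if b ∈ S then (1:ℝ) else 0))) := by
          rw [integral_fintype Integrable.of_finite]
          simp [smul_eq_mul, Measure.real_def]
      _ = ∑ b : B, Real.exp (ε * p) * ((μ {b}).toReal
            + (Real.exp (-ε) - 1) * ((μ {b}).toReal * (if b ∈ S then 1 else 0))) := by
          refine Finset.sum_congr rfl fun b _ => ?_
          by_cases hb : b ∈ S
          · rw [if_pos hb, show ε * (p - 1) = ε * p + -ε by ring, Real.exp_add]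
            ring
          · rw [if_neg hb, show ε * (p - 0) = ε * p by ring]
            ring
      _ = Real.exp (ε * p) * (1 + (Real.exp (-ε) - 1) * p) := by
          rw [← Finset.mul_sum]
          congr 1
          rw [Finset.sum_add_distrib, ← Finset.mul_sum, sum_singleton_toReal μ S]
          congr 1
          have := sum_singleton_toReal μ (Set.univ : Set B)
          simpa using this
  have hbase_nonneg : 0 ≤ 1 + (Real.exp (-ε) - 1) * p := by
    nlinarith [Real.exp_nonneg (-ε)]
  have hprod : mgf Z P ε ≤ Real.exp ((ε * p + (Real.exp (-ε) - 1) * p) * W) := by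
    rw [hZ, hXindep.mgf_sum hXmeas s]
    calc ∏ i ∈ s, mgf (X i) P ε
        = ∏ _i ∈ s, (Real.exp (ε * p) * (1 + (Real.exp (-ε) - 1) * p)) :=
          Finset.prod_congr rfl hmgfi
      _ = (Real.exp (ε * p) * (1 + (Real.exp (-ε) - 1) * p)) ^ W := by
          rw [Finset.prod_const, hcard]
      _ ≤ (Real.exp (ε * p) * Real.exp ((Real.exp (-ε) - 1) * p)) ^ W := by
          refine pow_le_pow_left₀ (mul_nonneg (Real.exp_nonneg _) hbase_nonneg) ?_ W
          refine mul_le_mul_of_nonneg_left ?_ (Real.exp_nonneg _)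
          linarith [Real.add_one_le_exp ((Real.exp (-ε) - 1) * p)]
      _ = Real.exp ((ε * p + (Real.exp (-ε) - 1) * p) * W) := by
          rw [← Real.exp_add, ← Real.exp_nat_mul, mul_comm]
  have hWpos : (0:ℝ) < W := by
    have : (1:ℝ) ≤ W := by exact_mod_cast hW
    linarith
  have hsub : {x | p - (1 / (W : ℝ)) * ∑ i ∈ s, (if ω i x ∈ S then (1:ℝ) else 0) > ε}
      ⊆ {x | (W:ℝ) * ε ≤ Z x} := by
    intro x hx
    simp only [Set.mem_setOf_eq] at hx ⊢
    rw [hZapp x]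
    set sx := ∑ i ∈ s, (if ω i x ∈ S then (1:ℝ) else 0) with hsx
    have h3 : (W:ℝ) * ((1/(W:ℝ)) * sx) = sx := by field_simp
    nlinarith [mul_lt_mul_of_pos_left hx hWpos, h3]
  have hmain : Real.exp (-ε * ((W:ℝ) * ε)) * mgf Z P ε ≤ Real.exp (-(W:ℝ) * ε ^ 2 / 2) := by
    calc Real.exp (-ε * ((W:ℝ) * ε)) * mgf Z P ε
        ≤ Real.exp (-ε * ((W:ℝ) * ε)) * Real.exp ((ε * p + (Real.exp (-ε) - 1) * p) * W) :=
          mul_le_mul_of_nonneg_left hprod (Real.exp_nonneg _)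
      _ = Real.exp (-ε * ((W:ℝ) * ε) + (ε * p + (Real.exp (-ε) - 1) * p) * W) :=
          (Real.exp_add _ _).symm
      _ ≤ Real.exp (-(W:ℝ) * ε ^ 2 / 2) := by
          apply Real.exp_le_exp.mpr
          have hkey : ε * p + (Real.exp (-ε) - 1) * p ≤ ε ^ 2 / 2 := by
            nlinarith [exp_neg_le_quad hε.le, sq_nonneg ε]
          nlinarith [mul_le_mul_of_nonneg_right hkey hWpos.le]
  calc P {x | p - (1 / (W : ℝ)) * ∑ i ∈ s, (if ω i x ∈ S then (1:ℝ) else 0) > ε}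
      ≤ P {x | (W:ℝ) * ε ≤ Z x} := measure_mono hsub
    _ = ENNReal.ofReal ((P {x | (W:ℝ) * ε ≤ Z x}).toReal) :=
        (ENNReal.ofReal_toReal (measure_ne_top _ _)).symm
    _ ≤ ENNReal.ofReal (Real.exp (-ε * ((W:ℝ) * ε)) * mgf Z P ε) :=
        ENNReal.ofReal_le_ofReal
          (measure_ge_le_exp_mul_mgf (X := Z) (t := ε) ((W:ℝ) * ε) hε.le hint)
    _ ≤ ENNReal.ofReal (Real.exp (-(W:ℝ) * ε ^ 2 / 2)) := ENNReal.ofReal_le_ofReal hmain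

/-- For fixed `M ≥ 1`, window size `W ≥ 1` and `ε > 0`, the probability that
the mass of the unobserved set exceeds the rate of discovery by more than `ε` is at most
`exp (-W ε² / 2)`. -/
theorem discovery_rate_one_window
    {Ω : Type*} [MeasurableSpace Ω] (P : Measure Ω) [IsProbabilityMeasure P]
    {B : Type*} [Fintype B] [Nonempty B] [DecidableEq B] [MeasurableSpace B] [MeasurableSingletonClass B]
    (μ : Measure B) [IsProbabilityMeasure μ]
    (ω : ℕ → Ω → B)
    (hmeas : ∀ i, Measurable (ω i))
    (hindep : iIndepFun ω P)
    (hdist : ∀ i, Measure.map (ω i) P = μ)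
    (M W : ℕ) (hM : 1 ≤ M) (hW : 1 ≤ W) (ε : ℝ) (hε : 0 < ε) :
    P {x | (μ {b | ∀ i ∈ Finset.Icc 1 M, ω i x ≠ b}).toReal
          - (1 / (W : ℝ)) * ∑ i ∈ Finset.Icc 1 W,
              (if ∀ j ∈ Finset.Icc (1 : ℕ) M, ω j x ≠ ω (M + i) x then (1 : ℝ) else 0) > ε}
      ≤ ENNReal.ofReal (Real.exp (-(W : ℝ) * ε ^ 2 / 2)) := by
  classical
  let f : Ω → ((Finset.Icc 1 M : Finset ℕ) → B) := fun x i => ω i x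
  let g : Ω → ((Finset.Icc (M+1) (M+W) : Finset ℕ) → B) := fun x i => ω i x
  have hfmeas : Measurable f := measurable_pi_lambda _ (fun i => hmeas i)
  have hfg : IndepFun f g P := by
    refine hindep.indepFun_finset (Finset.Icc 1 M) (Finset.Icc (M+1) (M+W)) ?_ hmeas
    rw [Finset.disjoint_left]
    intro a ha hb
    simp only [Finset.mem_Icc] at ha hb
    omega
  let S : ((Finset.Icc 1 M : Finset ℕ) → B) → Set B := fun u => {b | ∀ i, u i ≠ b}
  let D : ((Finset.Icc 1 M : Finset ℕ) → B) → Set ((Finset.Icc (M+1) (M+W) : Finset ℕ) → B) :=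
    fun u => {y | (μ (S u)).toReal - (1/(W:ℝ)) * ∑ i ∈ Finset.Icc 1 W,
        (if h : M + i ∈ Finset.Icc (M+1) (M+W) then
          (if y ⟨M+i, h⟩ ∈ S u then (1:ℝ) else 0) else 0) > ε}
  have hmemT : ∀ i ∈ Finset.Icc 1 W, M + i ∈ Finset.Icc (M+1) (M+W) := by
    intro i hi
    simp only [Finset.mem_Icc] at hi ⊢
    omega
  have hsub : {x | (μ {b | ∀ i ∈ Finset.Icc 1 M, ω i x ≠ b}).toReal
          - (1 / (W : ℝ)) * ∑ i ∈ Finset.Icc 1 W,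
              (if ∀ j ∈ Finset.Icc (1 : ℕ) M, ω j x ≠ ω (M + i) x then (1 : ℝ) else 0) > ε}
      ⊆ ⋃ u ∈ (Finset.univ : Finset ((Finset.Icc 1 M : Finset ℕ) → B)),
          (f ⁻¹' {u} ∩ g ⁻¹' (D u)) := by
    intro x hx
    simp only [Set.mem_setOf_eq] at hx
    refine Set.mem_biUnion (Finset.mem_univ (f x)) ⟨rfl, ?_⟩
    simp only [Set.mem_preimage, Set.mem_setOf_eq, D]
    have hSet : {b | ∀ i ∈ Finset.Icc 1 M, ω i x ≠ b} = S (f x) := by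
      ext b
      simp only [S, Set.mem_setOf_eq, f]
      constructor
      · intro h i
        exact h i i.2
      · intro h i hi
        exact h ⟨i, hi⟩
    have hsum : ∀ i ∈ Finset.Icc 1 W,
        (if h : M + i ∈ Finset.Icc (M+1) (M+W) then
          (if g x ⟨M+i, h⟩ ∈ S (f x) then (1:ℝ) else 0) else 0)
        = (if ∀ j ∈ Finset.Icc (1 : ℕ) M, ω j x ≠ ω (M + i) x then (1 : ℝ) else 0) := by
      intro i hi
      rw [dif_pos (hmemT i hi)]
      refine if_congr ?_ rfl rfl
      show ω (M+i) x ∈ S (f x) ↔ _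
      rw [← hSet]
      simp only [Set.mem_setOf_eq]
    rw [Finset.sum_congr rfl hsum, ← hSet]
    exact hx
  have hGD : ∀ u, g ⁻¹' (D u) = {x | (μ (S u)).toReal
      - (1/(W:ℝ)) * ∑ i ∈ Finset.Icc (M+1) (M+W), (if ω i x ∈ S u then (1:ℝ) else 0) > ε} := by
    intro u
    ext x
    simp only [Set.mem_preimage, Set.mem_setOf_eq, D]
    have hre : ∑ i ∈ Finset.Icc 1 W,
        (if h : M + i ∈ Finset.Icc (M+1) (M+W) then
          (if g x ⟨M+i, h⟩ ∈ S u then (1:ℝ) else 0) else 0)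
        = ∑ i ∈ Finset.Icc (M+1) (M+W), (if ω i x ∈ S u then (1:ℝ) else 0) := by
      have h1 : ∀ i ∈ Finset.Icc 1 W,
          (if h : M + i ∈ Finset.Icc (M+1) (M+W) then
            (if g x ⟨M+i, h⟩ ∈ S u then (1:ℝ) else 0) else 0)
          = (if ω (M+i) x ∈ S u then (1:ℝ) else 0) := by
        intro i hi
        rw [dif_pos (hmemT i hi)]
      rw [Finset.sum_congr rfl h1]
      rw [show Finset.Icc (M+1) (M+W) = (Finset.Icc 1 W).map (addLeftEmbedding M) from
        (Finset.map_add_left_Icc 1 W M).symm, Finset.sum_map]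
      exact Finset.sum_congr rfl (fun i hi => rfl)
    rw [hre]
  have hbound : ∀ u, P (g ⁻¹' (D u)) ≤ ENNReal.ofReal (Real.exp (-(W:ℝ) * ε ^ 2 / 2)) := by
    intro u
    rw [hGD u]
    exact chernoff_aux P μ ω hmeas hindep hdist M W hW ε hε (S u)
  calc P {x | (μ {b | ∀ i ∈ Finset.Icc 1 M, ω i x ≠ b}).toReal
          - (1 / (W : ℝ)) * ∑ i ∈ Finset.Icc 1 W,
              (if ∀ j ∈ Finset.Icc (1 : ℕ) M, ω j x ≠ ω (M + i) x then (1 : ℝ) else 0) > ε}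
      ≤ P (⋃ u ∈ (Finset.univ : Finset ((Finset.Icc 1 M : Finset ℕ) → B)),
          (f ⁻¹' {u} ∩ g ⁻¹' (D u))) := measure_mono hsub
    _ ≤ ∑ u ∈ (Finset.univ : Finset ((Finset.Icc 1 M : Finset ℕ) → B)),
          P (f ⁻¹' {u} ∩ g ⁻¹' (D u)) := measure_biUnion_finset_le _ _
    _ = ∑ u ∈ (Finset.univ : Finset ((Finset.Icc 1 M : Finset ℕ) → B)),
          P (f ⁻¹' {u}) * P (g ⁻¹' (D u)) := by
        refine Finset.sum_congr rfl fun u _ => ?_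
        exact (indepFun_iff_measure_inter_preimage_eq_mul.mp hfg) {u} (D u)
          (measurableSet_singleton u) (Set.Finite.measurableSet (Set.toFinite (D u)))
    _ ≤ ∑ u ∈ (Finset.univ : Finset ((Finset.Icc 1 M : Finset ℕ) → B)),
          P (f ⁻¹' {u}) * ENNReal.ofReal (Real.exp (-(W:ℝ) * ε ^ 2 / 2)) :=
        Finset.sum_le_sum fun u _ => mul_le_mul_right (hbound u) _
    _ = (∑ u ∈ (Finset.univ : Finset ((Finset.Icc 1 M : Finset ℕ) → B)),
          P (f ⁻¹' {u})) * ENNReal.ofReal (Real.exp (-(W:ℝ) * ε ^ 2 / 2)) :=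
        (Finset.sum_mul _ _ _).symm
    _ ≤ 1 * ENNReal.ofReal (Real.exp (-(W:ℝ) * ε ^ 2 / 2)) := by
        refine mul_le_mul_left ?_ _
        rw [sum_measure_preimage_singleton _ (fun u _ => hfmeas (measurableSet_singleton u))]
        exact prob_le_one
    _ = ENNReal.ofReal (Real.exp (-(W:ℝ) * ε ^ 2 / 2)) := one_mul _
end

section
/- Let c > 0 and ε > 0 be reals with γ := c ε² / 2 > 1, let M̲ ≥ 2 be an integer, and let W : ℕ → ℕ assign to each M ≥ 1 an integer window size with W(M) ≥ c · max{log M̲, log M} (natural logarithm). Then P( there exists an integer M ≥ 1 such that π(U_M) − R_{M,W(M)} > ε ) ≤ M̲^{1−γ} + Σ_{M=M̲}^{∞} M^{−γ} ≤ (γ/(γ−1)) · (M̲ − 1)^{1−γ}. -/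
open MeasureTheory ProbabilityTheory Real

lemma exp_neg_le (t : ℝ) (ht : 0 ≤ t) : Real.exp (-t) ≤ 1 - t + t ^ 2 / 2 := by
  set g : ℝ → ℝ := fun t => 1 - t + t ^ 2 / 2 - Real.exp (-t) with hg
  have hderiv : ∀ x : ℝ, HasDerivAt g (x - 1 + Real.exp (-x)) x := by
    intro x
    have h1 : HasDerivAt (fun x : ℝ => 1 - x) (-1) x := by
      exact (hasDerivAt_id' x).const_sub 1
    have h2 : HasDerivAt (fun x : ℝ => x ^ 2 / 2) x x := by
      simpa using (hasDerivAt_pow 2 x).div_const 2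
    have h3 : HasDerivAt (fun x : ℝ => Real.exp (-x)) (Real.exp (-x) * (-1)) x :=
      (Real.hasDerivAt_exp (-x)).comp x (hasDerivAt_neg x)
    have := (h1.add h2).sub h3
    refine this.congr_deriv ?_
    ring
  have hmono : Monotone g := by
    apply monotone_of_deriv_nonneg
    · exact fun x => ((hderiv x).differentiableAt)
    · intro x
      rw [(hderiv x).deriv]
      have := Real.add_one_le_exp (-x)
      linarith
  have h0 : g 0 = 0 := by simp [hg]
  have := hmono ht
  rw [h0] at this
  simpa [hg, sub_nonneg] using this

lemma bernoulli_mgf_le {p t : ℝ} (hp0 : 0 ≤ p) (hp1 : p ≤ 1) (ht : 0 ≤ t) :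
    (1 - p) * Real.exp (t * p) + p * Real.exp (t * (p - 1)) ≤ Real.exp (t ^ 2 / 2) := by
  have key : (1 - p) * Real.exp (t * p) + p * Real.exp (t * (p - 1))
      = Real.exp (t * p) * (1 - p * (1 - Real.exp (-t))) := by
    rw [show t * (p - 1) = t * p + (-t) by ring, Real.exp_add]
    ring
  rw [key]
  have h1 : 1 - p * (1 - Real.exp (-t)) ≤ Real.exp (-(p * (1 - Real.exp (-t)))) := by
    have := Real.add_one_le_exp (-(p * (1 - Real.exp (-t))))
    linarith
  have hnn : 0 ≤ 1 - p * (1 - Real.exp (-t)) := by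
    have h2 : Real.exp (-t) ≤ 1 := Real.exp_le_one_iff.mpr (by linarith)
    nlinarith [Real.exp_pos (-t)]
  calc Real.exp (t * p) * (1 - p * (1 - Real.exp (-t)))
      ≤ Real.exp (t * p) * Real.exp (-(p * (1 - Real.exp (-t)))) := by
        apply mul_le_mul_of_nonneg_left h1 (Real.exp_pos _).le
    _ = Real.exp (p * (t - 1 + Real.exp (-t))) := by rw [← Real.exp_add]; ring_nf
    _ ≤ Real.exp (t ^ 2 / 2) := by
        apply Real.exp_le_exp.mpr
        have hb : 0 ≤ t - 1 + Real.exp (-t) := by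
          have := Real.add_one_le_exp (-t); linarith
        have hc : t - 1 + Real.exp (-t) ≤ t ^ 2 / 2 := by
          have := exp_neg_le t ht; linarith
        nlinarith


lemma perM_bound
    {Ω : Type*} [MeasurableSpace Ω] (P : Measure Ω) [IsProbabilityMeasure P]
    {B : Type*} [Fintype B] [Nonempty B] [DecidableEq B]
    [MeasurableSpace B] [MeasurableSingletonClass B]
    (μ : Measure B) [IsProbabilityMeasure μ]
    (ω : ℕ → Ω → B)
    (hmeas : ∀ i, Measurable (ω i))
    (hindep : iIndepFun ω P)
    (hdist : ∀ i, Measure.map (ω i) P = μ)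
    (ε : ℝ) (hε : 0 < ε) (M Wn : ℕ) (hWn : 1 ≤ Wn) :
    P {x | (μ {b | ∀ i ∈ Finset.Icc 1 M, ω i x ≠ b}).toReal
            - (1 / (Wn : ℝ)) * ∑ i ∈ Finset.Icc 1 Wn,
                (if ∀ j ∈ Finset.Icc (1 : ℕ) M, ω j x ≠ ω (M + i) x then (1 : ℝ) else 0)
            > ε}
      ≤ ENNReal.ofReal (Real.exp (-(Wn : ℝ) * ε ^ 2 / 2)) := by
  classical
  set ι := {j // j ∈ Finset.Icc 1 M} with hι
  set T : Finset ℕ := Finset.Icc (M + 1) (M + Wn) with hT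
  set Sv : (ι → B) → Set B := fun v => {b | ∀ j : ι, v j ≠ b} with hSv
  have hSmeas : ∀ v, MeasurableSet (Sv v) := fun v => (Set.to_countable _).measurableSet
  set pv : (ι → B) → ℝ := fun v => (μ (Sv v)).toReal with hpv
  set f : (ι → B) → B → ℝ := fun v b => if (∀ j : ι, v j ≠ b) then 1 else 0 with hf
  set X : (ι → B) → ℕ → Ω → ℝ := fun v i x => pv v - f v (ω i x) with hX
  set tupleS : Ω → (ι → B) := fun x j => ω j x with htupleS
  set Av : (ι → B) → Set Ω := fun v => tupleS ⁻¹' {v} with hAv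
  set Cv : (ι → B) → Set Ω := fun v => {x | (Wn : ℝ) * ε ≤ (∑ i ∈ T, X v i) x} with hCv
  have hδnn : (0:ℝ) ≤ Real.exp (-(Wn : ℝ) * ε ^ 2 / 2) := (Real.exp_pos _).le
  -- basic facts
  have hfnn : ∀ v b, 0 ≤ f v b := by intro v b; simp only [hf]; split <;> norm_num
  have hfle : ∀ v b, f v b ≤ 1 := by intro v b; simp only [hf]; split <;> norm_num
  have hpv0 : ∀ v, 0 ≤ pv v := fun v => ENNReal.toReal_nonneg
  have hpv1 : ∀ v, pv v ≤ 1 := by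
    intro v
    have : μ (Sv v) ≤ 1 := prob_le_one
    simpa using ENNReal.toReal_mono ENNReal.one_ne_top this
  have hfmeas : ∀ v, Measurable (f v) := fun v => measurable_of_countable _
  have hXmeas : ∀ v i, Measurable (X v i) :=
    fun v i => measurable_const.sub ((hfmeas v).comp (hmeas i))
  -- step 1 : event inclusion
  have hsub : {x | (μ {b | ∀ i ∈ Finset.Icc 1 M, ω i x ≠ b}).toReal
            - (1 / (Wn : ℝ)) * ∑ i ∈ Finset.Icc 1 Wn,
                (if ∀ j ∈ Finset.Icc (1 : ℕ) M, ω j x ≠ ω (M + i) x then (1 : ℝ) else 0)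
            > ε} ⊆ ⋃ v : ι → B, Av v ∩ Cv v := by
    intro x hx
    simp only [Set.mem_setOf_eq] at hx
    refine Set.mem_iUnion.2 ⟨tupleS x, ?_, ?_⟩
    · simp [hAv]
    · -- x ∈ Cv (tupleS x)
      have hWpos : (0:ℝ) < (Wn:ℝ) := by exact_mod_cast hWn
      have hseteq : {b | ∀ i ∈ Finset.Icc 1 M, ω i x ≠ b} = Sv (tupleS x) := by
        ext b
        simp only [hSv, Set.mem_setOf_eq, htupleS]
        exact ⟨fun h j => h j j.2, fun h i hi => h ⟨i, hi⟩⟩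
      have hifeq : ∀ i, (if ∀ j ∈ Finset.Icc (1 : ℕ) M, ω j x ≠ ω (M + i) x then (1:ℝ) else 0)
          = f (tupleS x) (ω (M + i) x) := by
        intro i
        simp only [hf, htupleS]
        congr 1
        simp only [eq_iff_iff]
        exact ⟨fun h j => h j j.2, fun h i hi => h ⟨i, hi⟩⟩
      rw [hseteq] at hx
      simp only [hifeq] at hx
      -- multiply out
      have h1 : (Wn:ℝ) * ε < (Wn:ℝ) * pv (tupleS x)
          - ∑ i ∈ Finset.Icc 1 Wn, f (tupleS x) (ω (M + i) x) := by
        have h2 := (mul_lt_mul_iff_right₀ hWpos).mpr hx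
        rw [mul_sub] at h2
        have h3 : (Wn:ℝ) * (1 / (Wn:ℝ) * ∑ i ∈ Finset.Icc 1 Wn, f (tupleS x) (ω (M + i) x))
            = ∑ i ∈ Finset.Icc 1 Wn, f (tupleS x) (ω (M + i) x) := by
          field_simp
        rw [h3] at h2
        linarith
      have hTmap : T = Finset.map (addLeftEmbedding M) (Finset.Icc 1 Wn) := by
        ext i
        simp only [Finset.mem_map, Finset.mem_Icc, addLeftEmbedding_apply, hT]
        constructor
        · rintro ⟨h1, h2⟩; exact ⟨i - M, ⟨by omega, by omega⟩, by omega⟩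
        · rintro ⟨a, ha, rfl⟩; omega
      have hre : ∑ i ∈ Finset.Icc 1 Wn, f (tupleS x) (ω (M + i) x)
          = ∑ i ∈ T, f (tupleS x) (ω i x) := by
        rw [hTmap, Finset.sum_map]
        apply Finset.sum_congr rfl
        intro i _
        simp [addLeftEmbedding_apply]
      have hcard : T.card = Wn := by simp [hT]
      simp only [hCv, Set.mem_setOf_eq, Finset.sum_apply, hX]
      rw [Finset.sum_sub_distrib, Finset.sum_const, hcard]
      rw [hre] at h1
      have : (Wn:ℝ) * ε ≤ Wn • pv (tupleS x) - ∑ i ∈ T, f (tupleS x) (ω i x) := by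
        rw [nsmul_eq_mul]; linarith
      exact this
  -- measurability
  have htupleSmeas : Measurable tupleS := measurable_pi_lambda _ (fun j => hmeas j)
  have hsing : ∀ v : ι → B, MeasurableSet ({v} : Set (ι → B)) := by
    intro v
    have h : ({v} : Set (ι → B)) = Set.pi Set.univ (fun j => {v j}) := by
      ext u
      simp only [Set.mem_singleton_iff, Set.mem_pi, Set.mem_univ, forall_true_left,
        funext_iff]
    rw [h]
    exact MeasurableSet.univ_pi (fun j => measurableSet_singleton _)
  have hAvmeas : ∀ v, MeasurableSet (Av v) := fun v => htupleSmeas (hsing v)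
  -- independence of the two blocks
  have hdisj : Disjoint (Finset.Icc 1 M) T := by
    rw [Finset.disjoint_left]
    intro a ha hb
    simp only [Finset.mem_Icc, hT] at ha hb
    omega
  have hIF : IndepFun (fun a (i : (Finset.Icc 1 M : Finset ℕ)) => ω i a)
      (fun a (i : T) => ω i a) P :=
    hindep.indepFun_finset (Finset.Icc 1 M) T hdisj hmeas
  -- product formula for each v
  have hprod : ∀ v : ι → B, P (Av v ∩ Cv v) = P (Av v) * P (Cv v) := by
    intro v
    set ψ : ({j // j ∈ T} → B) → ℝ := fun u => ∑ j : {j // j ∈ T}, (pv v - f v (u j)) with hψ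
    have hψmeas : Measurable ψ := by
      apply Finset.measurable_sum
      intro j _
      exact measurable_const.sub ((hfmeas v).comp (measurable_pi_apply j))
    have hcomp : IndepFun (id ∘ tupleS) (ψ ∘ (fun a (i : T) => ω i a)) P :=
      hIF.comp measurable_id hψmeas
    have hZeq : (ψ ∘ (fun a (i : T) => ω i a)) = fun x => (∑ i ∈ T, X v i) x := by
      funext x
      simp only [Function.comp_apply, hψ, Finset.sum_apply]
      rw [← Finset.sum_coe_sort T (fun i => X v i x)]
    have hindepZ : IndepFun tupleS (fun x => (∑ i ∈ T, X v i) x) P := by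
      rw [← hZeq]
      exact hcomp
    have hCveq : Cv v = (fun x => (∑ i ∈ T, X v i) x) ⁻¹' (Set.Ici ((Wn : ℝ) * ε)) := by
      ext x
      simp [hCv]
    have := (indepFun_iff_measure_inter_preimage_eq_mul.mp hindepZ) {v}
      (Set.Ici ((Wn : ℝ) * ε)) (hsing v) measurableSet_Ici
    rw [hAv, hCveq]
    exact this
  -- Chernoff bound for each v
  have hCvbound : ∀ v : ι → B, P (Cv v) ≤ ENNReal.ofReal (Real.exp (-(Wn : ℝ) * ε ^ 2 / 2)) := by
    intro v
    have hXle : ∀ i x, X v i x ≤ pv v := by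
      intro i x
      simp only [hX]
      have := hfnn v (ω i x)
      linarith
    have hint : ∀ i ∈ T, Integrable (fun x => Real.exp (ε * X v i x)) P := by
      intro i _
      refine Integrable.mono' (integrable_const (Real.exp (ε * pv v)))
        (((hXmeas v i).const_mul ε).exp.aestronglyMeasurable)
        (ae_of_all _ (fun x => ?_))
      rw [Real.norm_eq_abs, abs_of_pos (Real.exp_pos _)]
      exact Real.exp_le_exp.mpr (mul_le_mul_of_nonneg_left (hXle i x) hε.le)
    have hiX : iIndepFun (X v) P := by
      have := hindep.comp (fun _ b => pv v - f v b)
        (fun _ => measurable_const.sub (hfmeas v))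
      exact this
    have hchern := measure_ge_le_exp_mul_mgf (X := ∑ i ∈ T, X v i) (t := ε)
      ((Wn : ℝ) * ε) hε.le (hiX.integrable_exp_mul_sum (fun i => hXmeas v i) hint)
    -- compute mgf of each X v i
    have hmgf_eq : ∀ i : ℕ, mgf (X v i) P ε
        = (1 - pv v) * Real.exp (ε * pv v) + pv v * Real.exp (ε * (pv v - 1)) := by
      intro i
      have hpre : MeasurableSet (ω i ⁻¹' (Sv v)) := (hmeas i) (hSmeas v)
      have hpt : (fun x => Real.exp (ε * X v i x))
          = fun x => (Real.exp (ε * (pv v - 1)) - Real.exp (ε * pv v)) *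
              (Set.indicator (ω i ⁻¹' (Sv v)) (fun _ => (1:ℝ)) x) + Real.exp (ε * pv v) := by
        funext x
        by_cases hxm : ω i x ∈ Sv v
        · have hfx : f v (ω i x) = 1 := by
            simp only [hf]
            exact if_pos hxm
          rw [Set.indicator_of_mem (by exact hxm)]
          simp only [hX, hfx]
          ring
        · have hfx : f v (ω i x) = 0 := by
            simp only [hf]
            exact if_neg hxm
          rw [Set.indicator_of_notMem (by exact hxm)]
          simp only [hX, hfx]
          ring
      have hPpre : P (ω i ⁻¹' (Sv v)) = μ (Sv v) := by
        rw [← hdist i, Measure.map_apply (hmeas i) (hSmeas v)]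
      rw [mgf, hpt]
      rw [integral_add (((integrable_const (1:ℝ)).indicator hpre).const_mul _)
        (integrable_const _)]
      rw [integral_const, integral_const_mul, integral_indicator_const _ hpre]
      simp only [measure_univ, ENNReal.toReal_one, one_smul, smul_eq_mul, mul_one]
      rw [measureReal_def, hPpre, measureReal_def, measure_univ, ENNReal.toReal_one]
      show (Real.exp (ε * (pv v - 1)) - Real.exp (ε * pv v)) * pv v
          + 1 * Real.exp (ε * pv v)
        = (1 - pv v) * Real.exp (ε * pv v) + pv v * Real.exp (ε * (pv v - 1))
      ring
    have hmgf_le : ∀ i ∈ T, mgf (X v i) P ε ≤ Real.exp (ε ^ 2 / 2) := by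
      intro i _
      rw [hmgf_eq i]
      exact bernoulli_mgf_le (hpv0 v) (hpv1 v) hε.le
    have hmgf_sum : mgf (∑ i ∈ T, X v i) P ε ≤ Real.exp ((Wn : ℝ) * (ε ^ 2 / 2)) := by
      rw [hiX.mgf_sum (fun i => hXmeas v i) T]
      calc ∏ i ∈ T, mgf (X v i) P ε ≤ ∏ i ∈ T, Real.exp (ε ^ 2 / 2) :=
            Finset.prod_le_prod (fun i _ => mgf_nonneg) hmgf_le
        _ = Real.exp (ε ^ 2 / 2) ^ T.card := Finset.prod_const _
        _ = Real.exp ((Wn : ℝ) * (ε ^ 2 / 2)) := by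
            rw [show T.card = Wn by simp [hT], ← Real.exp_nat_mul]
    have htoReal : (P (Cv v)).toReal ≤ Real.exp (-(Wn : ℝ) * ε ^ 2 / 2) := by
      have h1 : (P (Cv v)).toReal ≤ Real.exp (-ε * ((Wn : ℝ) * ε)) * mgf (∑ i ∈ T, X v i) P ε := by
        have hCveq : Cv v = {x | (Wn : ℝ) * ε ≤ (∑ i ∈ T, X v i) x} := by rfl
        rw [hCveq]
        exact hchern
      calc (P (Cv v)).toReal
          ≤ Real.exp (-ε * ((Wn : ℝ) * ε)) * Real.exp ((Wn : ℝ) * (ε ^ 2 / 2)) := by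
            apply le_trans h1
            exact mul_le_mul_of_nonneg_left hmgf_sum (Real.exp_pos _).le
        _ = Real.exp (-(Wn : ℝ) * ε ^ 2 / 2) := by
            rw [← Real.exp_add]
            congr 1
            ring
    rw [← ENNReal.ofReal_toReal (measure_ne_top P (Cv v))]
    exact ENNReal.ofReal_le_ofReal htoReal
  -- sum of P(Av) is 1
  have hAvdisj : Pairwise (Function.onFun Disjoint Av) := by
    intro v v' hne
    simp only [Function.onFun, hAv]
    rw [Set.disjoint_left]
    intro x hx hx'
    simp only [Set.mem_preimage, Set.mem_singleton_iff] at hx hx'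
    exact hne (hx ▸ hx')
  have hAvsum : ∑ v : ι → B, P (Av v) = 1 := by
    have hunion : (⋃ v : ι → B, Av v) = Set.univ := by
      ext x
      simp only [Set.mem_iUnion, Set.mem_univ, iff_true, hAv, Set.mem_preimage,
        Set.mem_singleton_iff]
      exact ⟨tupleS x, rfl⟩
    calc ∑ v : ι → B, P (Av v) = ∑' v : ι → B, P (Av v) := (tsum_fintype _).symm
      _ = P (⋃ v : ι → B, Av v) := (measure_iUnion hAvdisj hAvmeas).symm
      _ = 1 := by rw [hunion]; exact measure_univ
  -- final chain
  calc P {x | (μ {b | ∀ i ∈ Finset.Icc 1 M, ω i x ≠ b}).toReal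
            - (1 / (Wn : ℝ)) * ∑ i ∈ Finset.Icc 1 Wn,
                (if ∀ j ∈ Finset.Icc (1 : ℕ) M, ω j x ≠ ω (M + i) x then (1 : ℝ) else 0)
            > ε}
      ≤ P (⋃ v : ι → B, Av v ∩ Cv v) := measure_mono hsub
    _ ≤ ∑' v : ι → B, P (Av v ∩ Cv v) := measure_iUnion_le _
    _ = ∑ v : ι → B, P (Av v ∩ Cv v) := tsum_fintype _
    _ = ∑ v : ι → B, P (Av v) * P (Cv v) := Finset.sum_congr rfl (fun v _ => hprod v)
    _ ≤ ∑ v : ι → B, P (Av v) * ENNReal.ofReal (Real.exp (-(Wn : ℝ) * ε ^ 2 / 2)) :=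
        Finset.sum_le_sum (fun v _ => mul_le_mul_right (hCvbound v) _)
    _ = (∑ v : ι → B, P (Av v)) * ENNReal.ofReal (Real.exp (-(Wn : ℝ) * ε ^ 2 / 2)) :=
        (Finset.sum_mul _ _ _).symm
    _ = ENNReal.ofReal (Real.exp (-(Wn : ℝ) * ε ^ 2 / 2)) := by rw [hAvsum, one_mul]

lemma step_ineq {γ : ℝ} (hγ : 1 < γ) {m : ℕ} (hm : 2 ≤ m) :
    (γ - 1) * (m : ℝ) ^ (-γ) ≤ ((m : ℝ) - 1) ^ (1 - γ) - (m : ℝ) ^ (1 - γ) := by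
  set x : ℝ := (m : ℝ) with hxdef
  have hx2 : (2:ℝ) ≤ x := by rw [hxdef]; exact_mod_cast hm
  have hx0 : (0:ℝ) < x := by linarith
  have hx1 : (0:ℝ) < x - 1 := by linarith
  have hlog : 1 / x ≤ Real.log (x / (x - 1)) := by
    have h1 : Real.log ((x - 1) / x) ≤ (x - 1) / x - 1 :=
      Real.log_le_sub_one_of_pos (by positivity)
    have h2 : Real.log (x / (x - 1)) = -Real.log ((x - 1) / x) := by
      rw [← Real.log_inv]
      congr 1
      field_simp
    have h3 : (x - 1) / x - 1 = -(1 / x) := by field_simp; ring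
    rw [h2]
    rw [h3] at h1
    linarith
  have key : x ^ (1 - γ) * (1 + (γ - 1) / x) ≤ (x - 1) ^ (1 - γ) := by
    have hrpow_pos : (0:ℝ) < x ^ (1 - γ) := Real.rpow_pos_of_pos hx0 _
    calc x ^ (1 - γ) * (1 + (γ - 1) / x)
        ≤ x ^ (1 - γ) * Real.exp ((γ - 1) / x) := by
          have := Real.add_one_le_exp ((γ - 1) / x)
          apply mul_le_mul_of_nonneg_left (by linarith) hrpow_pos.le
      _ ≤ x ^ (1 - γ) * Real.exp ((γ - 1) * Real.log (x / (x - 1))) := by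
          apply mul_le_mul_of_nonneg_left _ hrpow_pos.le
          apply Real.exp_le_exp.mpr
          calc (γ - 1) / x = (γ - 1) * (1 / x) := by ring
            _ ≤ (γ - 1) * Real.log (x / (x - 1)) :=
                mul_le_mul_of_nonneg_left hlog (by linarith)
      _ = x ^ (1 - γ) * (x / (x - 1)) ^ (γ - 1) := by
          congr 1
          rw [Real.rpow_def_of_pos (by positivity), mul_comm]
      _ = (x - 1) ^ (1 - γ) := by
          rw [Real.div_rpow hx0.le hx1.le]
          rw [show (1 - γ) = -(γ - 1) by ring, Real.rpow_neg hx0.le, Real.rpow_neg hx1.le]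
          have hxp : x ^ (γ - 1) ≠ 0 := (Real.rpow_pos_of_pos hx0 _).ne'
          have hxp1 : (x - 1) ^ (γ - 1) ≠ 0 := (Real.rpow_pos_of_pos hx1 _).ne'
          field_simp
  have hxpow : x ^ (1 - γ) * ((γ - 1) / x) = (γ - 1) * x ^ (-γ) := by
    rw [show (-γ) = (1 - γ) + (-1) by ring, Real.rpow_add hx0, Real.rpow_neg_one]
    field_simp
  nlinarith [key, hxpow]

lemma tail_sum_le {γ : ℝ} (hγ : 1 < γ) {a : ℕ} (ha : 2 ≤ a) :
    ∑' m : Set.Ici a, ((m : ℕ) : ℝ) ^ (-γ) ≤ ((a : ℝ) - 1) ^ (1 - γ) / (γ - 1) := by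
  have hγ1 : (0:ℝ) < γ - 1 := by linarith
  have hcast : (((a - 1 : ℕ)) : ℝ) = (a : ℝ) - 1 := by
    have : 1 ≤ a := by omega
    push_cast [this]
    ring
  set Ga : ℝ := ((a : ℝ) - 1) ^ (1 - γ) with hGa
  -- partial sums
  have hpartial : ∀ N : ℕ, a - 1 ≤ N →
      ∑ m ∈ Finset.Icc a N, (γ - 1) * (m : ℝ) ^ (-γ) ≤ Ga - (N : ℝ) ^ (1 - γ) := by
    intro N hN
    induction N, hN using Nat.le_induction with
    | base =>
      rw [Finset.Icc_eq_empty (by omega)]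
      simp [hGa, hcast]
    | succ N hN ih =>
      rw [Finset.sum_Icc_succ_top (by omega)]
      have hstep := step_ineq hγ (show 2 ≤ N + 1 by omega)
      have hcast2 : ((N + 1 : ℕ) : ℝ) = (N : ℝ) + 1 := by push_cast; ring
      rw [hcast2] at hstep ⊢
      have : ((N : ℝ) + 1) - 1 = (N : ℝ) := by ring
      rw [this] at hstep
      linarith
  have hpartial2 : ∀ N : ℕ, ∑ m ∈ Finset.Icc a N, (m : ℝ) ^ (-γ) ≤ Ga / (γ - 1) := by
    intro N
    rcases le_or_gt (a - 1) N with hN | hN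
    · have h1 := hpartial N hN
      have h2 : (0:ℝ) ≤ (N : ℝ) ^ (1 - γ) := Real.rpow_nonneg (Nat.cast_nonneg _) _
      have h3 : (γ - 1) * ∑ m ∈ Finset.Icc a N, (m : ℝ) ^ (-γ) ≤ Ga := by
        rw [Finset.mul_sum]
        linarith
      rw [div_eq_inv_mul, ← mul_le_mul_iff_right₀ hγ1, ← mul_assoc, mul_inv_cancel₀ hγ1.ne',
        one_mul]
      exact h3
    · rw [Finset.Icc_eq_empty (by omega)]
      simp only [Finset.sum_empty]
      have ha1 : (0:ℝ) ≤ (a:ℝ) - 1 := by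
        have h2a : (2:ℝ) ≤ (a:ℝ) := by exact_mod_cast ha
        linarith
      exact div_nonneg (Real.rpow_nonneg ha1 _) hγ1.le
  have hsummable : Summable (fun m : Set.Ici a => ((m : ℕ) : ℝ) ^ (-γ)) := by
    have : Summable (fun n : ℕ => (n : ℝ) ^ (-γ)) :=
      Real.summable_nat_rpow.mpr (by linarith)
    exact this.subtype _
  apply Summable.tsum_le_of_sum_le hsummable
  intro u
  -- embed into an Icc
  classical
  set N : ℕ := u.sup (fun x => x.val) with hN
  have himg : ∑ x ∈ u, ((x : ℕ) : ℝ) ^ (-γ)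
      = ∑ m ∈ u.image Subtype.val, (m : ℝ) ^ (-γ) := by
    exact (Finset.sum_image (s := u) (f := fun m : ℕ => (m : ℝ) ^ (-γ))
      (g := (Subtype.val : Set.Ici a → ℕ)) (fun x _ y _ h => Subtype.ext h)).symm
  rw [himg]
  have hsub : u.image Subtype.val ⊆ Finset.Icc a N := by
    intro m hm
    simp only [Finset.mem_image] at hm
    obtain ⟨x, hx, rfl⟩ := hm
    simp only [Finset.mem_Icc]
    exact ⟨x.2, Finset.le_sup hx⟩
  calc ∑ m ∈ u.image Subtype.val, (m : ℝ) ^ (-γ)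
      ≤ ∑ m ∈ Finset.Icc a N, (m : ℝ) ^ (-γ) :=
        Finset.sum_le_sum_of_subset_of_nonneg hsub
          (fun m _ _ => Real.rpow_nonneg (Nat.cast_nonneg _) _)
    _ ≤ Ga / (γ - 1) := hpartial2 N

/-- With window sizes `W M ≥ c · max (log M̲) (log M)` and `γ = c ε²/2 > 1`,
`P(∃ M ≥ 1, π(U_M) - R_{M,W M} > ε) ≤ M̲^(1-γ) + ∑_{M=M̲}^∞ M^(-γ)
  ≤ (γ/(γ-1)) (M̲-1)^(1-γ)`. -/
theorem discovery_rate_failure_bound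
    {Ω : Type*} [MeasurableSpace Ω] (P : Measure Ω) [IsProbabilityMeasure P]
    {B : Type*} [Fintype B] [Nonempty B] [DecidableEq B]
    [MeasurableSpace B] [MeasurableSingletonClass B]
    (μ : Measure B) [IsProbabilityMeasure μ]
    (ω : ℕ → Ω → B)
    (hmeas : ∀ i, Measurable (ω i))
    (hindep : iIndepFun ω P)
    (hdist : ∀ i, Measure.map (ω i) P = μ)
    (c ε γ : ℝ) (hc : 0 < c) (hε : 0 < ε)
    (hγdef : γ = c * ε ^ 2 / 2) (hγ : 1 < γ)
    (Mlow : ℕ) (hMlow : 2 ≤ Mlow)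
    (W : ℕ → ℕ)
    (hW : ∀ M : ℕ, 1 ≤ M → c * max (Real.log Mlow) (Real.log M) ≤ (W M : ℝ)) :
    P {x | ∃ M : ℕ, 1 ≤ M ∧
          (μ {b | ∀ i ∈ Finset.Icc 1 M, ω i x ≠ b}).toReal
            - (1 / (W M : ℝ)) * ∑ i ∈ Finset.Icc 1 (W M),
                (if ∀ j ∈ Finset.Icc (1 : ℕ) M, ω j x ≠ ω (M + i) x then (1 : ℝ) else 0)
            > ε}
        ≤ ENNReal.ofReal
            ((Mlow : ℝ) ^ (1 - γ) + ∑' m : Set.Ici Mlow, ((m : ℕ) : ℝ) ^ (-γ))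
    ∧ (Mlow : ℝ) ^ (1 - γ) + ∑' m : Set.Ici Mlow, ((m : ℕ) : ℝ) ^ (-γ)
        ≤ (γ / (γ - 1)) * ((Mlow : ℝ) - 1) ^ (1 - γ) := by
  classical
  have hMlow2 : (2:ℝ) ≤ (Mlow:ℝ) := by exact_mod_cast hMlow
  have hlogpos : 0 < Real.log Mlow := Real.log_pos (by linarith)
  have hγ1 : (0:ℝ) < γ - 1 := by linarith
  have hγpos : (0:ℝ) < γ := by linarith
  have hml1 : (0:ℝ) < (Mlow:ℝ) - 1 := by linarith
  have htail := tail_sum_le hγ hMlow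
  have hmono : (Mlow:ℝ) ^ (1-γ) ≤ ((Mlow:ℝ) - 1) ^ (1-γ) :=
    Real.rpow_le_rpow_of_nonpos hml1 (by linarith) (by linarith)
  have hpart2 : (Mlow : ℝ) ^ (1 - γ) + ∑' m : Set.Ici Mlow, ((m : ℕ) : ℝ) ^ (-γ)
      ≤ (γ / (γ - 1)) * ((Mlow : ℝ) - 1) ^ (1 - γ) := by
    have heq : (γ / (γ - 1)) * ((Mlow : ℝ) - 1) ^ (1 - γ)
        = ((Mlow:ℝ)-1)^(1-γ) + ((Mlow:ℝ)-1)^(1-γ) / (γ-1) := by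
      field_simp
      ring
    rw [heq]
    linarith
  refine ⟨?_, hpart2⟩
  -- part 1
  set Q : ℕ → Set Ω := fun M => {x | (μ {b | ∀ i ∈ Finset.Icc 1 M, ω i x ≠ b}).toReal
            - (1 / (W M : ℝ)) * ∑ i ∈ Finset.Icc 1 (W M),
                (if ∀ j ∈ Finset.Icc (1 : ℕ) M, ω j x ≠ ω (M + i) x then (1 : ℝ) else 0)
            > ε} with hQ
  set E : ℕ → Set Ω := fun M => {x | 1 ≤ M ∧ x ∈ Q M} with hE
  have hset : {x | ∃ M : ℕ, 1 ≤ M ∧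
          (μ {b | ∀ i ∈ Finset.Icc 1 M, ω i x ≠ b}).toReal
            - (1 / (W M : ℝ)) * ∑ i ∈ Finset.Icc 1 (W M),
                (if ∀ j ∈ Finset.Icc (1 : ℕ) M, ω j x ≠ ω (M + i) x then (1 : ℝ) else 0)
            > ε} = ⋃ M : ℕ, E M := by
    ext x
    simp only [Set.mem_setOf_eq, Set.mem_iUnion, hE, hQ]
  have hW1 : ∀ M, 1 ≤ M → 1 ≤ W M := by
    intro M hM
    by_contra h
    have hW0 : W M = 0 := by omega
    have h1 := hW M hM
    rw [hW0] at h1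
    have hmax : Real.log Mlow ≤ max (Real.log Mlow) (Real.log M) := le_max_left _ _
    have h2 : c * Real.log Mlow ≤ c * max (Real.log Mlow) (Real.log M) :=
      mul_le_mul_of_nonneg_left hmax hc.le
    have h3 : 0 < c * Real.log Mlow := mul_pos hc hlogpos
    simp only [Nat.cast_zero] at h1
    linarith
  have hEbound : ∀ M : ℕ, P (E M) ≤ (if M ∈ Finset.Icc 1 (Mlow - 1)
        then ENNReal.ofReal ((Mlow:ℝ) ^ (-γ)) else 0)
      + (if Mlow ≤ M then ENNReal.ofReal ((M:ℝ) ^ (-γ)) else 0) := by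
    intro M
    rcases Nat.eq_zero_or_pos M with h0 | hM
    · have hE0 : E M = ∅ := by
        ext x
        simp [hE, h0]
      rw [hE0]
      simp
    · have hsubQ : E M ⊆ Q M := fun x hx => hx.2
      have h1 : P (E M) ≤ ENNReal.ofReal (Real.exp (-(W M : ℝ) * ε ^ 2 / 2)) :=
        le_trans (measure_mono hsubQ)
          (perM_bound P μ ω hmeas hindep hdist ε hε M (W M) (hW1 M hM))
      have hexp : Real.exp (-(W M:ℝ) * ε^2/2)
          ≤ Real.exp (-γ * max (Real.log Mlow) (Real.log M)) := by
        apply Real.exp_le_exp.mpr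
        have h2 := hW M hM
        rw [hγdef]
        nlinarith [mul_le_mul_of_nonneg_right h2 (sq_nonneg ε)]
      rcases le_or_gt Mlow M with hge | hlt
      · have hMpos : (0:ℝ) < (M:ℝ) := by
          have : (2:ℝ) ≤ (M:ℝ) := by exact_mod_cast le_trans hMlow hge
          linarith
        have h2 : Real.exp (-γ * max (Real.log Mlow) (Real.log M)) ≤ (M:ℝ)^(-γ) := by
          rw [Real.rpow_def_of_pos hMpos]
          apply Real.exp_le_exp.mpr
          have hmax : Real.log M ≤ max (Real.log Mlow) (Real.log M) := le_max_right _ _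
          nlinarith
        have h3 : P (E M) ≤ ENNReal.ofReal ((M:ℝ)^(-γ)) :=
          le_trans h1 (ENNReal.ofReal_le_ofReal (le_trans hexp h2))
        rw [if_neg (by simp only [Finset.mem_Icc]; omega), if_pos hge, zero_add]
        exact h3
      · have h2 : Real.exp (-γ * max (Real.log Mlow) (Real.log M)) ≤ (Mlow:ℝ)^(-γ) := by
          rw [Real.rpow_def_of_pos (by linarith)]
          apply Real.exp_le_exp.mpr
          have hmax : Real.log Mlow ≤ max (Real.log Mlow) (Real.log M) := le_max_left _ _
          nlinarith
        have h3 : P (E M) ≤ ENNReal.ofReal ((Mlow:ℝ)^(-γ)) :=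
          le_trans h1 (ENNReal.ofReal_le_ofReal (le_trans hexp h2))
        rw [if_pos (by simp only [Finset.mem_Icc]; omega), if_neg (by omega), add_zero]
        exact h3
  have hsum1 : (∑' M : ℕ, (if M ∈ Finset.Icc 1 (Mlow - 1)
        then ENNReal.ofReal ((Mlow:ℝ) ^ (-γ)) else 0))
      ≤ ENNReal.ofReal ((Mlow:ℝ) ^ (1-γ)) := by
    rw [tsum_eq_sum (s := Finset.Icc 1 (Mlow - 1)) (fun b hb => if_neg hb)]
    have : ∀ M ∈ Finset.Icc 1 (Mlow - 1), (if M ∈ Finset.Icc 1 (Mlow - 1)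
        then ENNReal.ofReal ((Mlow:ℝ) ^ (-γ)) else 0) = ENNReal.ofReal ((Mlow:ℝ) ^ (-γ)) :=
      fun M hM => if_pos hM
    rw [Finset.sum_congr rfl this, Finset.sum_const, Nat.card_Icc]
    have hcard : Mlow - 1 + 1 - 1 = Mlow - 1 := by omega
    rw [hcard, nsmul_eq_mul]
    have hcast : ((Mlow - 1 : ℕ) : ENNReal) = ENNReal.ofReal ((Mlow:ℝ) - 1) := by
      rw [← ENNReal.ofReal_natCast]
      congr 1
      push_cast [show 1 ≤ Mlow by omega]
      ring
    rw [hcast, ← ENNReal.ofReal_mul (by linarith)]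
    apply ENNReal.ofReal_le_ofReal
    have hsplit : (Mlow:ℝ)^(1-γ) = (Mlow:ℝ) * (Mlow:ℝ)^(-γ) := by
      rw [show (1-γ) = 1 + (-γ) by ring, Real.rpow_add (by linarith), Real.rpow_one]
    rw [hsplit]
    exact mul_le_mul_of_nonneg_right (by linarith) (Real.rpow_nonneg (by linarith) _)
  have hsum2 : (∑' M : ℕ, (if Mlow ≤ M then ENNReal.ofReal ((M:ℝ) ^ (-γ)) else 0))
      = ENNReal.ofReal (∑' m : Set.Ici Mlow, ((m : ℕ) : ℝ) ^ (-γ)) := by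
    have hsummable : Summable (fun m : Set.Ici Mlow => ((m : ℕ) : ℝ) ^ (-γ)) := by
      have : Summable (fun n : ℕ => (n : ℝ) ^ (-γ)) :=
        Real.summable_nat_rpow.mpr (by linarith)
      exact this.subtype _
    rw [ENNReal.ofReal_tsum_of_nonneg (fun m => Real.rpow_nonneg (Nat.cast_nonneg _) _)
      hsummable]
    rw [tsum_subtype (Set.Ici Mlow) (fun M => ENNReal.ofReal ((M:ℝ) ^ (-γ)))]
    apply tsum_congr
    intro M
    by_cases h : Mlow ≤ M
    · simp [Set.indicator_apply, Set.mem_Ici, h]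
    · simp [Set.indicator_apply, Set.mem_Ici, h]
  have hnn1 : (0:ℝ) ≤ (Mlow:ℝ) ^ (1-γ) := Real.rpow_nonneg (by linarith) _
  have hnn2 : (0:ℝ) ≤ ∑' m : Set.Ici Mlow, ((m : ℕ) : ℝ) ^ (-γ) :=
    tsum_nonneg (fun m => Real.rpow_nonneg (Nat.cast_nonneg _) _)
  calc P {x | ∃ M : ℕ, 1 ≤ M ∧
          (μ {b | ∀ i ∈ Finset.Icc 1 M, ω i x ≠ b}).toReal
            - (1 / (W M : ℝ)) * ∑ i ∈ Finset.Icc 1 (W M),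
                (if ∀ j ∈ Finset.Icc (1 : ℕ) M, ω j x ≠ ω (M + i) x then (1 : ℝ) else 0)
            > ε}
      = P (⋃ M : ℕ, E M) := by rw [hset]
    _ ≤ ∑' M : ℕ, P (E M) := measure_iUnion_le _
    _ ≤ ∑' M : ℕ, ((if M ∈ Finset.Icc 1 (Mlow - 1)
            then ENNReal.ofReal ((Mlow:ℝ) ^ (-γ)) else 0)
          + (if Mlow ≤ M then ENNReal.ofReal ((M:ℝ) ^ (-γ)) else 0)) :=
        ENNReal.tsum_le_tsum hEbound
    _ = (∑' M : ℕ, (if M ∈ Finset.Icc 1 (Mlow - 1)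
            then ENNReal.ofReal ((Mlow:ℝ) ^ (-γ)) else 0))
        + (∑' M : ℕ, (if Mlow ≤ M then ENNReal.ofReal ((M:ℝ) ^ (-γ)) else 0)) :=
        ENNReal.tsum_add
    _ ≤ ENNReal.ofReal ((Mlow:ℝ) ^ (1-γ))
        + ENNReal.ofReal (∑' m : Set.Ici Mlow, ((m : ℕ) : ℝ) ^ (-γ)) := by
        rw [hsum2]
        exact add_le_add_left hsum1 _
    _ = ENNReal.ofReal
            ((Mlow : ℝ) ^ (1 - γ) + ∑' m : Set.Ici Mlow, ((m : ℕ) : ℝ) ^ (-γ)) :=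
        (ENNReal.ofReal_add hnn1 hnn2).symm
end

section
/- Let α, ε, δ be reals with 0 < ε < α and 0 < δ < 1, let γ > 1, set c = 2γ/ε², let M̲ be any integer with M̲ ≥ 1 + (γ/(δ(γ−1)))^{1/(γ−1)}, and let W : ℕ → ℕ assign to each M ≥ 1 an integer window size with W(M) ≥ c · max{log M̲, log M} (natural logarithm). Then the probability that the stopping criterion of DiscoverMass triggers while insufficient mass has been discovered is small: P( there exists an integer M ≥ 1 with R_{M,W(M)} < α − ε and π(U_M) > α ) ≤ δ. Equivalently, with probability at least 1 − δ, at every M for which the stopping criterion R_{M,W(M)} < α − ε holds, the discovered mass satisfies π(O_M) ≥ 1 − α. -/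
open MeasureTheory ProbabilityTheory Real

lemma dm_exp_neg_le {u : ℝ} (hu : 0 ≤ u) : Real.exp (-u) ≤ 1 - u + u ^ 2 / 2 := by
  have h := Real.quadratic_le_exp_of_nonneg hu
  have hpos : (0:ℝ) < 1 + u + u ^ 2 / 2 := by positivity
  rw [Real.exp_neg]
  have h2 : (Real.exp u)⁻¹ ≤ (1 + u + u ^ 2 / 2)⁻¹ := inv_anti₀ hpos h
  refine h2.trans ?_
  rw [inv_le_iff_one_le_mul₀ hpos]
  nlinarith [sq_nonneg u, sq_nonneg (u ^ 2)]

lemma dm_mgf_bound {p t : ℝ} (hp0 : 0 ≤ p) (hp1 : p ≤ 1) (ht : 0 ≤ t) :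
    (1 - p) + p * Real.exp (-t) ≤ Real.exp (-(p * t) + t ^ 2 / 2) := by
  have step1 : (1 - p) + p * Real.exp (-t) ≤ Real.exp (-(p * (1 - Real.exp (-t)))) := by
    have := Real.add_one_le_exp (-(p * (1 - Real.exp (-t))))
    linarith
  refine step1.trans (Real.exp_le_exp.mpr ?_)
  have h1 := dm_exp_neg_le ht
  have h2 : Real.exp (-t) ≤ 1 := Real.exp_le_one_iff.mpr (by linarith)
  nlinarith [mul_le_mul_of_nonneg_left h1 hp0, sq_nonneg t]

lemma dm_bernoulli {u p : ℝ} (hu0 : 0 < u) (hu1 : u < 1) (hp : 0 < p) :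
    1 + p * (1 - u) ≤ u ^ (-p) := by
  rcases le_or_gt 1 p with hp1 | hp1
  · have hinv : (1:ℝ) ≤ u⁻¹ := (one_le_inv₀ hu0).mpr hu1.le
    have key := one_add_mul_self_le_rpow_one_add (s := u⁻¹ - 1) (by linarith) hp1
    have h2 : (1 + (u⁻¹ - 1)) = u⁻¹ := by ring
    rw [h2] at key
    have h3 : u ^ (-p) = u⁻¹ ^ p := by
      rw [Real.rpow_neg hu0.le, ← Real.inv_rpow hu0.le]
    rw [h3]
    refine le_trans ?_ key
    have h4 : 1 - u ≤ u⁻¹ - 1 := by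
      have : u * (u⁻¹ - 1) = 1 - u := by field_simp
      nlinarith
    nlinarith
  · have key := Real.geom_mean_le_arith_mean2_weighted (w₁ := 1 - p) (w₂ := p)
      (p₁ := 1) (p₂ := u) (by linarith) hp.le zero_le_one hu0.le (by ring)
    rw [Real.one_rpow, one_mul, mul_one] at key
    have hup : 0 < u ^ p := Real.rpow_pos_of_pos hu0 p
    have h5 : (1 + p * (1 - u)) * u ^ p ≤ 1 := by nlinarith [sq_nonneg (p * (1 - u))]
    rw [Real.rpow_neg hu0.le]
    calc 1 + p * (1 - u) = (1 + p * (1 - u)) * u ^ p * (u ^ p)⁻¹ := by field_simp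
      _ ≤ 1 * (u ^ p)⁻¹ := by
          exact mul_le_mul_of_nonneg_right h5 (by positivity)
      _ = (u ^ p)⁻¹ := one_mul _

lemma dm_tail {γ : ℝ} (hγ : 1 < γ) {x : ℝ} (hx : 1 ≤ x) :
    (x + 1) ^ (-γ) ≤ (x ^ (1 - γ) - (x + 1) ^ (1 - γ)) / (γ - 1) := by
  have hx1 : (0:ℝ) < x + 1 := by linarith
  have hx0 : (0:ℝ) < x := by linarith
  set u : ℝ := x / (x + 1) with hu
  have hu0 : 0 < u := by positivity
  have hu1 : u < 1 := by rw [hu, div_lt_one hx1]; linarith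
  have hb := dm_bernoulli hu0 hu1 (p := γ - 1) (by linarith)
  have hxu : x = (x + 1) * u := by rw [hu]; field_simp
  have hA : x ^ (1 - γ) = (x + 1) ^ (1 - γ) * u ^ (1 - γ) := by
    rw [hxu, Real.mul_rpow hx1.le hu0.le]
    rw [← hxu]
  have hexp : (1 - γ) = -(γ - 1) := by ring
  have h1u : 1 - u = 1 / (x + 1) := by rw [hu]; field_simp; ring
  have hpow : (x + 1) ^ (1 - γ) = (x + 1) ^ (-γ) * (x + 1) := by
    rw [show (1 - γ) = -γ + 1 by ring, Real.rpow_add_one hx1.ne']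
  rw [le_div_iff₀ (by linarith : (0:ℝ) < γ - 1)]
  have hppos : (0:ℝ) ≤ (x + 1) ^ (1 - γ) := (Real.rpow_pos_of_pos hx1 _).le
  have key : (x + 1) ^ (1 - γ) * (1 + (γ - 1) * (1 - u)) ≤ (x + 1) ^ (1 - γ) * u ^ (-(γ - 1)) :=
    mul_le_mul_of_nonneg_left hb hppos
  rw [← hexp] at key
  rw [← hA] at key
  have hgoal : (x + 1) ^ (-γ) * (γ - 1) ≤ x ^ (1 - γ) - (x + 1) ^ (1 - γ) := by
    have expand : (x + 1) ^ (1 - γ) * (1 + (γ - 1) * (1 - u))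
        = (x + 1) ^ (1 - γ) + (x + 1) ^ (-γ) * (x + 1) * ((γ - 1) * (1 / (x + 1))) := by
      rw [← h1u, ← hpow]; ring
    rw [expand] at key
    have hc : (x + 1) * ((γ - 1) * (1 / (x + 1))) = γ - 1 := by field_simp
    nlinarith [key]
  linarith


lemma dm_partial_sum {γ : ℝ} (hγ : 1 < γ) {Mlow : ℕ} (h1 : 1 ≤ Mlow) (N : ℕ) :
    ∑ M ∈ Finset.range (N + 1),
        (if M = 0 then (0:ℝ) else ((max Mlow M : ℕ) : ℝ) ^ (-γ))
      ≤ (Mlow : ℝ) * (Mlow : ℝ) ^ (-γ) + (Mlow : ℝ) ^ (1 - γ) / (γ - 1) := by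
  have hML : (0:ℝ) < (Mlow : ℝ) := by exact_mod_cast h1
  have hinv : (0:ℝ) < (γ - 1)⁻¹ := by
    have : (0:ℝ) < γ - 1 := by linarith
    positivity
  have claim : ∀ N : ℕ, ∑ M ∈ Finset.range (N + 1),
        (if M = 0 then (0:ℝ) else ((max Mlow M : ℕ) : ℝ) ^ (-γ))
      ≤ (min N Mlow : ℕ) * (Mlow : ℝ) ^ (-γ)
        + ((Mlow : ℝ) ^ (1 - γ) - ((max N Mlow : ℕ) : ℝ) ^ (1 - γ)) * (γ - 1)⁻¹ := by
    intro N
    induction N with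
    | zero => simp
    | succ N ih =>
      rw [Finset.sum_range_succ]
      have hne : N + 1 ≠ 0 := Nat.succ_ne_zero N
      rw [if_neg hne]
      rcases le_or_gt (N + 1) Mlow with hcase | hcase
      · have e1 : max Mlow (N + 1) = Mlow := max_eq_left hcase
        have e2 : min (N + 1) Mlow = N + 1 := min_eq_left hcase
        have e3 : min N Mlow = N := min_eq_left (by omega)
        have e4 : max N Mlow = Mlow := max_eq_right (by omega)
        have e5 : max (N + 1) Mlow = Mlow := max_eq_right hcase
        rw [e1, e2, e5]
        rw [e3, e4] at ih
        push_cast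
        push_cast at ih
        linarith
      · have e1 : max Mlow (N + 1) = N + 1 := max_eq_right (by omega)
        have e2 : min (N + 1) Mlow = Mlow := min_eq_right (by omega)
        have e3 : min N Mlow = Mlow := min_eq_right (by omega)
        have e4 : max N Mlow = N := max_eq_left (by omega)
        have e5 : max (N + 1) Mlow = N + 1 := max_eq_left (by omega)
        rw [e1, e2, e5]
        rw [e3, e4] at ih
        have hN1 : (1:ℝ) ≤ (N : ℝ) := by
          have : 1 ≤ N := by omega
          exact_mod_cast this
        have ht := dm_tail hγ hN1
        rw [div_eq_mul_inv] at ht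
        have hcast : ((N:ℝ) + 1) = ((N + 1 : ℕ) : ℝ) := by push_cast; ring
        rw [hcast] at ht
        have expand : ((Mlow : ℝ) ^ (1 - γ) - ((N + 1 : ℕ) : ℝ) ^ (1 - γ)) * (γ - 1)⁻¹
            = ((Mlow : ℝ) ^ (1 - γ) - (N : ℝ) ^ (1 - γ)) * (γ - 1)⁻¹
              + ((N : ℝ) ^ (1 - γ) - ((N + 1 : ℕ) : ℝ) ^ (1 - γ)) * (γ - 1)⁻¹ := by ring
        rw [expand]
        linarith
  refine (claim N).trans ?_
  have hminle : ((min N Mlow : ℕ) : ℝ) ≤ (Mlow : ℝ) := by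
    exact_mod_cast min_le_right N Mlow
  have hpow0 : (0:ℝ) ≤ ((max N Mlow : ℕ) : ℝ) ^ (1 - γ) := by
    apply Real.rpow_nonneg
    positivity
  have hr : (0:ℝ) ≤ (Mlow : ℝ) ^ (-γ) := Real.rpow_nonneg hML.le _
  have : ((Mlow : ℝ) ^ (1 - γ) - ((max N Mlow : ℕ) : ℝ) ^ (1 - γ)) * (γ - 1)⁻¹
      ≤ (Mlow : ℝ) ^ (1 - γ) / (γ - 1) := by
    rw [div_eq_mul_inv]
    have := mul_le_mul_of_nonneg_right
      (show (Mlow : ℝ) ^ (1 - γ) - ((max N Mlow : ℕ) : ℝ) ^ (1 - γ) ≤ (Mlow : ℝ) ^ (1 - γ) by linarith)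
      hinv.le
    exact this
  nlinarith [mul_le_mul_of_nonneg_right hminle hr]

lemma dm_final {γ δ : ℝ} (hγ : 1 < γ) (hδ0 : 0 < δ) {Mlow : ℕ}
    (hMlow : 1 + (γ / (δ * (γ - 1))) ^ (1 / (γ - 1)) ≤ (Mlow : ℝ)) :
    (Mlow : ℝ) * (Mlow : ℝ) ^ (-γ) + (Mlow : ℝ) ^ (1 - γ) / (γ - 1) ≤ δ := by
  have hg1 : (0:ℝ) < γ - 1 := by linarith
  set A : ℝ := γ / (δ * (γ - 1)) with hA
  have hApos : 0 < A := by positivity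
  set K : ℝ := A ^ (1 / (γ - 1)) with hK
  have hKpos : 0 < K := Real.rpow_pos_of_pos hApos _
  have hL : (0:ℝ) < (Mlow : ℝ) := by linarith
  have hKM : K ≤ (Mlow : ℝ) := by linarith
  have hX : A ≤ (Mlow : ℝ) ^ (γ - 1) := by
    have h1 : K ^ (γ - 1) ≤ (Mlow : ℝ) ^ (γ - 1) :=
      Real.rpow_le_rpow hKpos.le hKM hg1.le
    have h2 : K ^ (γ - 1) = A := by
      rw [hK, one_div, Real.rpow_inv_rpow hApos.le hg1.ne']
    linarith
  have hLg : (Mlow : ℝ) * (Mlow : ℝ) ^ (-γ) = (Mlow : ℝ) ^ (1 - γ) := by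
    rw [show (1 - γ) = -γ + 1 by ring, Real.rpow_add_one hL.ne', mul_comm]
  rw [hLg]
  have hXpos : 0 < (Mlow : ℝ) ^ (γ - 1) := Real.rpow_pos_of_pos hL _
  have hinv : (Mlow : ℝ) ^ (1 - γ) = ((Mlow : ℝ) ^ (γ - 1))⁻¹ := by
    rw [show (1 - γ) = -(γ - 1) by ring, Real.rpow_neg hL.le]
  rw [hinv]
  set X : ℝ := (Mlow : ℝ) ^ (γ - 1)
  have hAX : δ * (γ - 1) * A = γ := by
    rw [hA]; field_simp
  have key : γ ≤ δ * (γ - 1) * X := by nlinarith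

  have hX1 : X⁻¹ * X = 1 := inv_mul_cancel₀ hXpos.ne'
  calc X⁻¹ + X⁻¹ / (γ - 1) = X⁻¹ * (1 + (γ - 1)⁻¹) := by rw [div_eq_mul_inv]; ring
    _ = X⁻¹ * (γ / (γ - 1)) := by field_simp; ring
    _ ≤ δ := by
        have hpos : (0:ℝ) ≤ X⁻¹ / (γ - 1) := by positivity
        have h := mul_le_mul_of_nonneg_left key hpos
        have h2 : X⁻¹ / (γ - 1) * (δ * (γ - 1) * X) = δ := by
          field_simp
        have h3 : X⁻¹ * (γ / (γ - 1)) = X⁻¹ / (γ - 1) * γ := by ring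
        rw [h2] at h
        rw [h3]
        exact h


lemma dm_perM
    {Ω : Type*} [MeasurableSpace Ω] (P : Measure Ω) [IsProbabilityMeasure P]
    {B : Type*} [Fintype B] [DecidableEq B] [MeasurableSpace B] [MeasurableSingletonClass B]
    (μ : Measure B) [IsProbabilityMeasure μ]
    (ω : ℕ → Ω → B) (hmeas : ∀ i, Measurable (ω i))
    (hindep : iIndepFun ω P)
    (hdist : ∀ i, Measure.map (ω i) P = μ)
    (α ε : ℝ) (hε : 0 < ε)
    (M Wn : ℕ) (hWpos : 0 < (Wn : ℝ)) :
    P {x | (1 / (Wn : ℝ)) * ∑ i ∈ Finset.Icc 1 Wn,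
              (if ∀ j ∈ Finset.Icc (1 : ℕ) M, ω j x ≠ ω (M + i) x then (1 : ℝ) else 0)
            < α - ε
          ∧ (μ {b | ∀ i ∈ Finset.Icc 1 M, ω i x ≠ b}).toReal > α}
      ≤ ENNReal.ofReal (Real.exp (-(Wn : ℝ) * ε ^ 2 / 2)) := by
  classical
  set s1 : Finset ℕ := Finset.Icc 1 M with hs1
  set s2 : Finset ℕ := Finset.Icc (M + 1) (M + Wn) with hs2
  set T1 : Ω → (s1 → B) := fun a i => ω i a with hT1def
  set T2 : Ω → (s2 → B) := fun a i => ω i a with hT2def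
  have hT1 : Measurable T1 := measurable_pi_lambda _ (fun i => hmeas i)
  have hT2 : Measurable T2 := measurable_pi_lambda _ (fun i => hmeas i)
  have hdisj : Disjoint s1 s2 := by
    rw [Finset.disjoint_left]
    intro a ha1 ha2
    rw [hs1, Finset.mem_Icc] at ha1
    rw [hs2, Finset.mem_Icc] at ha2
    omega
  have hIndep := hindep.indepFun_finset s1 s2 hdisj hmeas
  rw [indepFun_iff_measure_inter_preimage_eq_mul] at hIndep
  -- the observed set
  set obs : Ω → Finset B := fun x => s1.image (fun i => ω i x) with hobsdef
  have hobs_attach : ∀ x, s1.attach.image (fun i => ω i.1 x) = obs x := by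
    intro x
    show Finset.image (fun i : s1 => ω i.1 x) s1.attach = Finset.image (fun i => ω i x) s1
    conv_rhs => rw [← Finset.attach_image_val (s := s1)]
    rw [Finset.image_image]
    rfl
  -- events
  set A : Finset B → Set Ω :=
    fun t => T1 ⁻¹' {v : s1 → B | s1.attach.image (fun i => v i) = t} with hAdef
  set C : Finset B → Set Ω :=
    fun t => T2 ⁻¹' {v : s2 → B |
      (1 / (Wn : ℝ)) * ∑ j ∈ s2.attach, (if v j ∈ t then (0:ℝ) else 1) < α - ε} with hCdef
  set TS : Finset (Finset B) :=
    Finset.univ.filter (fun t : Finset B => α < (μ ((↑t : Set B)ᶜ)).toReal) with hTSdef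
  -- sums transfer
  have hsum : ∀ x (t : Finset B),
      ∑ j ∈ s2.attach, (if T2 x j ∈ t then (0:ℝ) else 1)
        = ∑ i ∈ Finset.Icc 1 Wn, (if ω (M + i) x ∈ t then (0:ℝ) else 1) := by
    intro x t
    rw [Finset.sum_attach s2 (fun j => if ω j x ∈ t then (0:ℝ) else 1)]
    rw [hs2, show Finset.Icc (M + 1) (M + Wn) = (Finset.Icc 1 Wn).map (addLeftEmbedding M) by
      rw [Finset.map_add_left_Icc]]
    rw [Finset.sum_map]
    rfl
  -- inclusion into the union
  have hincl : {x | (1 / (Wn : ℝ)) * ∑ i ∈ Finset.Icc 1 Wn,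
              (if ∀ j ∈ Finset.Icc (1 : ℕ) M, ω j x ≠ ω (M + i) x then (1 : ℝ) else 0)
            < α - ε
          ∧ (μ {b | ∀ i ∈ Finset.Icc 1 M, ω i x ≠ b}).toReal > α}
      ⊆ ⋃ t ∈ TS, A t ∩ C t := by
    intro x hx
    obtain ⟨hx1, hx2⟩ := hx
    have hUset : {b | ∀ i ∈ Finset.Icc 1 M, ω i x ≠ b} = ((obs x : Set B))ᶜ := by
      ext b
      simp only [hobsdef, Set.mem_compl_iff, Set.mem_setOf_eq, Finset.mem_coe,
        Finset.mem_image, not_exists, not_and, hs1]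
    have hts : obs x ∈ TS := by
      rw [hTSdef, Finset.mem_filter]
      refine ⟨Finset.mem_univ _, ?_⟩
      rw [← hUset]
      exact hx2
    refine Set.mem_biUnion hts ⟨?_, ?_⟩
    · rw [hAdef]
      simp only [Set.mem_preimage, Set.mem_setOf_eq]
      exact hobs_attach x
    · rw [hCdef]
      simp only [Set.mem_preimage, Set.mem_setOf_eq]
      rw [hsum x (obs x)]
      have : ∀ i, (if ω (M + i) x ∈ obs x then (0:ℝ) else 1)
          = (if ∀ j ∈ Finset.Icc (1 : ℕ) M, ω j x ≠ ω (M + i) x then (1 : ℝ) else 0) := by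
        intro i
        have hmem : ω (M + i) x ∈ obs x ↔ ¬ (∀ j ∈ Finset.Icc (1 : ℕ) M, ω j x ≠ ω (M + i) x) := by
          simp only [hobsdef, Finset.mem_image, not_forall, hs1]
          constructor
          · rintro ⟨j, hj, hje⟩; exact ⟨j, hj, by simp [hje]⟩
          · rintro ⟨j, hj, hje⟩; exact ⟨j, hj, by simpa using hje⟩
        by_cases h : ∀ j ∈ Finset.Icc (1 : ℕ) M, ω j x ≠ ω (M + i) x
        · rw [if_pos h, if_neg (by rw [hmem]; exact not_not_intro h)]
        · rw [if_neg h, if_pos (hmem.mpr h)]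
      rw [Finset.sum_congr rfl (fun i _ => this i)]
      exact hx1
  refine (measure_mono hincl).trans ?_
  refine (measure_biUnion_finset_le TS _).trans ?_
  -- per-t bound
  have hperT : ∀ t ∈ TS, P (A t ∩ C t)
      ≤ P (A t) * ENNReal.ofReal (Real.exp (-(Wn : ℝ) * ε ^ 2 / 2)) := by
    intro t ht
    have hp : α < (μ ((↑t : Set B)ᶜ)).toReal := by
      rw [hTSdef, Finset.mem_filter] at ht
      exact ht.2
    set g : B → ℝ := fun b => if b ∈ t then 0 else -1 with hgdef
    have hgm : Measurable g := measurable_of_countable g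
    set NY : ℕ → Ω → ℝ := fun j => g ∘ ω j with hNYdef
    have hNYmeas : ∀ j, Measurable (NY j) := fun j => hgm.comp (hmeas j)
    have hNYindep : iIndepFun NY P :=
      hindep.comp (fun _ => g) (fun _ => hgm)
    have hNYle : ∀ j x, NY j x ≤ 0 := by
      intro j x
      simp only [hNYdef, hgdef, Function.comp_apply]
      split <;> norm_num
    have hint : ∀ j ∈ s2, Integrable (fun x => Real.exp (ε * NY j x)) P := by
      intro j _
      refine Integrable.mono' (integrable_const 1)
        (((hNYmeas j).const_mul ε).exp.aestronglyMeasurable) ?_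
      filter_upwards with x
      rw [Real.norm_eq_abs, abs_of_pos (Real.exp_pos _)]
      exact Real.exp_le_one_iff.mpr (mul_nonpos_of_nonneg_of_nonpos hε.le (hNYle j x))
    set X : Ω → ℝ := ∑ j ∈ s2, NY j with hXdef
    have hintX : Integrable (fun x => Real.exp (ε * X x)) P := by
      rw [hXdef]
      exact hNYindep.integrable_exp_mul_sum hNYmeas hint
    set p : ℝ := (μ ((↑t : Set B)ᶜ)).toReal with hpdef
    set q : ℝ := (μ (↑t : Set B)).toReal with hqdef
    have hsumq : ∀ s : Finset B, ∑ b ∈ s, (μ {b}).toReal = (μ (↑s : Set B)).toReal := by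
      intro s
      rw [← ENNReal.toReal_sum (fun _ _ => measure_ne_top μ _)]
      congr 1
      rw [← measure_biUnion_finset (f := fun b => ({b} : Set B)) ?_
        (fun b _ => measurableSet_singleton b)]
      · congr 1
        exact Set.biUnion_of_singleton (↑s : Set B)
      · intro a _ b _ hab
        simp only [Function.onFun, Set.disjoint_singleton_left, Set.mem_singleton_iff]
        exact hab
    have hqp : q + p = 1 := by
      rw [hqdef, hpdef, ← ENNReal.toReal_add (measure_ne_top μ _) (measure_ne_top μ _),
        measure_add_measure_compl (Set.toFinite _).measurableSet, measure_univ,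
        ENNReal.toReal_one]
    have hp0 : (0:ℝ) ≤ p := ENNReal.toReal_nonneg
    have hq0 : (0:ℝ) ≤ q := ENNReal.toReal_nonneg
    have hp1 : p ≤ 1 := by linarith
    have hmgf : ∀ j ∈ s2, mgf (NY j) P ε = q + Real.exp (-ε) * p := by
      intro j _
      have hmap := integral_map (μ := P) (φ := ω j) (hmeas j).aemeasurable
        (f := fun b => Real.exp (ε * g b)) ((hgm.const_mul ε).exp.aestronglyMeasurable)
      rw [hdist j] at hmap
      have h1 : mgf (NY j) P ε = ∫ b, Real.exp (ε * g b) ∂μ := by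
        unfold mgf
        rw [hmap]
        rfl
      have h2 : ∫ b, Real.exp (ε * g b) ∂μ = ∑ b, (μ {b}).toReal • Real.exp (ε * g b) :=
        integral_fintype (Integrable.of_finite)
      rw [h1, h2]
      have h3 : ∀ b : B, (μ {b}).toReal • Real.exp (ε * g b)
          = (if b ∈ t then (μ {b}).toReal else (μ {b}).toReal * Real.exp (-ε)) := by
        intro b
        by_cases hb : b ∈ t
        · simp [hgdef, hb]
        · simp only [hgdef, hb, if_false, smul_eq_mul, mul_neg, mul_one]
      rw [Finset.sum_congr rfl (fun b _ => h3 b), Finset.sum_ite]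
      have hft : Finset.univ.filter (fun b => b ∈ t) = t := by ext b; simp
      have hfc : Finset.univ.filter (fun b => ¬ b ∈ t) = tᶜ := by ext b; simp
      rw [hft, hfc, ← Finset.sum_mul, hsumq t, hsumq tᶜ, Finset.coe_compl]
      rw [← hqdef, ← hpdef]
      ring
    have hmgfb : ∀ j ∈ s2, mgf (NY j) P ε ≤ Real.exp (-(p * ε) + ε ^ 2 / 2) := by
      intro j hj
      rw [hmgf j hj]
      have hq : q = 1 - p := by linarith
      calc q + Real.exp (-ε) * p = (1 - p) + p * Real.exp (-ε) := by rw [hq]; ring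
        _ ≤ Real.exp (-(p * ε) + ε ^ 2 / 2) := dm_mgf_bound hp0 hp1 hε.le
    have hcard : s2.card = Wn := by rw [hs2, Nat.card_Icc]; omega
    have hmgfX : mgf X P ε ≤ Real.exp ((Wn : ℝ) * (-(p * ε) + ε ^ 2 / 2)) := by
      rw [hXdef, hNYindep.mgf_sum hNYmeas s2]
      calc ∏ j ∈ s2, mgf (NY j) P ε ≤ ∏ j ∈ s2, Real.exp (-(p * ε) + ε ^ 2 / 2) :=
            Finset.prod_le_prod (fun j _ => mgf_nonneg) hmgfb
        _ = Real.exp (-(p * ε) + ε ^ 2 / 2) ^ s2.card := Finset.prod_const _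
        _ = Real.exp ((Wn : ℝ) * (-(p * ε) + ε ^ 2 / 2)) := by
            rw [hcard, ← Real.exp_nat_mul]
    have hch := measure_ge_le_exp_mul_mgf (μ := P) (X := X) (-((Wn:ℝ) * (α - ε))) hε.le hintX
    have hexp_le : Real.exp (-ε * -((Wn:ℝ) * (α - ε))) * mgf X P ε
        ≤ Real.exp (-(Wn:ℝ) * ε ^ 2 / 2) := by
      calc Real.exp (-ε * -((Wn:ℝ) * (α - ε))) * mgf X P ε
          ≤ Real.exp (-ε * -((Wn:ℝ) * (α - ε)))
            * Real.exp ((Wn : ℝ) * (-(p * ε) + ε ^ 2 / 2)) :=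
            mul_le_mul_of_nonneg_left hmgfX (Real.exp_pos _).le
        _ = Real.exp (-ε * -((Wn:ℝ) * (α - ε)) + (Wn : ℝ) * (-(p * ε) + ε ^ 2 / 2)) :=
            (Real.exp_add _ _).symm
        _ ≤ Real.exp (-(Wn:ℝ) * ε ^ 2 / 2) := by
            apply Real.exp_le_exp.mpr
            nlinarith [mul_nonneg (mul_nonneg hWpos.le hε.le) (sub_nonneg.mpr hp.le)]
    have hsub : C t ⊆ {x | -((Wn:ℝ) * (α - ε)) ≤ X x} := by
      intro x hx
      rw [hCdef] at hx
      simp only [Set.mem_preimage, Set.mem_setOf_eq] at hx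
      rw [hsum x t] at hx
      have hXx : X x = -(∑ i ∈ Finset.Icc 1 Wn, (if ω (M + i) x ∈ t then (0:ℝ) else 1)) := by
        rw [hXdef, Finset.sum_apply]
        rw [show s2 = (Finset.Icc 1 Wn).map (addLeftEmbedding M) from by
          rw [Finset.map_add_left_Icc]]
        rw [Finset.sum_map]
        rw [Finset.sum_congr rfl (fun i _ =>
          show NY (addLeftEmbedding M i) x = -(if ω (M + i) x ∈ t then (0:ℝ) else 1) from by
            simp only [hNYdef, hgdef, Function.comp_apply, addLeftEmbedding_apply]
            split <;> norm_num)]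
        rw [Finset.sum_neg_distrib]
      have hS : ∑ i ∈ Finset.Icc 1 Wn, (if ω (M + i) x ∈ t then (0:ℝ) else 1)
          < (Wn:ℝ) * (α - ε) := by
        have h' := hx
        rw [one_div, inv_mul_eq_div, div_lt_iff₀ hWpos] at h'
        linarith [h']
      rw [Set.mem_setOf_eq, hXx]
      linarith
    have hCt : P (C t) ≤ ENNReal.ofReal (Real.exp (-(Wn:ℝ) * ε ^ 2 / 2)) := by
      refine (measure_mono hsub).trans ?_
      have hne : P {x | -((Wn:ℝ) * (α - ε)) ≤ X x} ≠ ⊤ := measure_ne_top _ _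
      rw [← ENNReal.ofReal_toReal hne]
      exact ENNReal.ofReal_le_ofReal (hch.trans hexp_le)
    have hfact : P (A t ∩ C t) = P (A t) * P (C t) := by
      rw [hAdef, hCdef]
      exact hIndep _ _ (Set.toFinite _).measurableSet (Set.toFinite _).measurableSet
    rw [hfact]
    exact mul_le_mul_right hCt _
  refine (Finset.sum_le_sum hperT).trans ?_
  rw [← Finset.sum_mul]
  have hAle : ∑ t ∈ TS, P (A t) ≤ 1 := by
    have hdisjA : (TS : Set (Finset B)).PairwiseDisjoint A := by
      intro t ht t' ht' hne
      rw [Function.onFun, Set.disjoint_left]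
      intro x hxA hxA'
      rw [hAdef] at hxA hxA'
      simp only [Set.mem_preimage, Set.mem_setOf_eq] at hxA hxA'
      exact hne (hxA ▸ hxA')
    have hmA : ∀ t ∈ TS, MeasurableSet (A t) :=
      fun t _ => hT1 (Set.toFinite _).measurableSet
    rw [← measure_biUnion_finset hdisjA hmA]
    exact prob_le_one
  calc (∑ t ∈ TS, P (A t)) * ENNReal.ofReal (Real.exp (-(Wn : ℝ) * ε ^ 2 / 2))
      ≤ 1 * ENNReal.ofReal (Real.exp (-(Wn : ℝ) * ε ^ 2 / 2)) := by
        exact mul_le_mul_left hAle _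
    _ = ENNReal.ofReal (Real.exp (-(Wn : ℝ) * ε ^ 2 / 2)) := one_mul _



/-- Correctness of the stopping criterion of `DiscoverMass`: with
`c = 2γ/ε²`, `M̲ ≥ 1 + (γ/(δ(γ-1)))^(1/(γ-1))` and windows `W M ≥ c max (log M̲) (log M)`,
the probability that there exists `M ≥ 1` with `R_{M,W M} < α - ε` while `π(U_M) > α`
is at most `δ`. -/
theorem discoverMass_stopping_criterion
    {Ω : Type*} [MeasurableSpace Ω] (P : Measure Ω) [IsProbabilityMeasure P]
    {B : Type*} [Fintype B] [Nonempty B] [DecidableEq B]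
    [MeasurableSpace B] [MeasurableSingletonClass B]
    (μ : Measure B) [IsProbabilityMeasure μ]
    (ω : ℕ → Ω → B)
    (hmeas : ∀ i, Measurable (ω i))
    (hindep : iIndepFun ω P)
    (hdist : ∀ i, Measure.map (ω i) P = μ)
    (α ε δ γ c : ℝ) (hε : 0 < ε) (hεα : ε < α) (hδ0 : 0 < δ) (hδ1 : δ < 1)
    (hγ : 1 < γ) (hc : c = 2 * γ / ε ^ 2)
    (Mlow : ℕ) (hMlow : 1 + (γ / (δ * (γ - 1))) ^ (1 / (γ - 1)) ≤ (Mlow : ℝ))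
    (W : ℕ → ℕ)
    (hW : ∀ M : ℕ, 1 ≤ M → c * max (Real.log Mlow) (Real.log M) ≤ (W M : ℝ)) :
    P {x | ∃ M : ℕ, 1 ≤ M ∧
          (1 / (W M : ℝ)) * ∑ i ∈ Finset.Icc 1 (W M),
              (if ∀ j ∈ Finset.Icc (1 : ℕ) M, ω j x ≠ ω (M + i) x then (1 : ℝ) else 0)
            < α - ε
          ∧ (μ {b | ∀ i ∈ Finset.Icc 1 M, ω i x ≠ b}).toReal > α}
      ≤ ENNReal.ofReal δ := by
  classical
  have hγ1 : (0:ℝ) < γ - 1 := by linarith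
  have hK : 0 < (γ / (δ * (γ - 1))) ^ (1 / (γ - 1)) :=
    Real.rpow_pos_of_pos (by positivity) _
  have hMlow1 : (1:ℝ) < (Mlow : ℝ) := by linarith
  have hMlowN : 1 ≤ Mlow := by exact_mod_cast hMlow1.le
  have hlogMlow : 0 < Real.log Mlow := Real.log_pos hMlow1
  have hcpos : 0 < c := by rw [hc]; positivity
  have hWpos : ∀ M : ℕ, 1 ≤ M → 0 < (W M : ℝ) := by
    intro M hM
    have h1 : 0 < c * max (Real.log Mlow) (Real.log M) :=
      mul_pos hcpos (lt_of_lt_of_le hlogMlow (le_max_left _ _))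
    exact h1.trans_le (hW M hM)
  have hbound : ∀ M : ℕ, 1 ≤ M →
      Real.exp (-(W M : ℝ) * ε ^ 2 / 2) ≤ ((max Mlow M : ℕ) : ℝ) ^ (-γ) := by
    intro M hM
    set L : ℝ := ((max Mlow M : ℕ) : ℝ) with hLdef
    have hL1 : (1:ℝ) < L := by
      have h2 : 1 < Mlow := by exact_mod_cast hMlow1
      have h3 : 1 < max Mlow M := lt_of_lt_of_le h2 (le_max_left _ _)
      rw [hLdef]
      exact_mod_cast h3
    have hL0 : (0:ℝ) < L := by linarith
    have hlogL : max (Real.log Mlow) (Real.log M) = Real.log L := by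
      rw [hLdef]
      rcases le_total Mlow M with h | h
      · rw [max_eq_right h,
          max_eq_right (Real.log_le_log (Nat.cast_pos.mpr hMlowN) (by exact_mod_cast h))]
      · rw [max_eq_left h,
          max_eq_left (Real.log_le_log (Nat.cast_pos.mpr hM) (by exact_mod_cast h))]
    have key : γ * Real.log L ≤ (W M : ℝ) * ε ^ 2 / 2 := by
      have h1 := hW M hM
      rw [hlogL] at h1
      have h2 : c * Real.log L * (ε ^ 2 / 2) ≤ (W M : ℝ) * (ε ^ 2 / 2) :=
        mul_le_mul_of_nonneg_right h1 (by positivity)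
      rw [hc] at h2
      have hε2 : (ε:ℝ) ^ 2 ≠ 0 := by positivity
      have h3 : 2 * γ / ε ^ 2 * Real.log L * (ε ^ 2 / 2) = γ * Real.log L := by
        field_simp
      rw [h3] at h2
      linarith
    calc Real.exp (-(W M : ℝ) * ε ^ 2 / 2) ≤ Real.exp (-(γ * Real.log L)) := by
          apply Real.exp_le_exp.mpr
          linarith
      _ = L ^ (-γ) := by
          rw [show -(γ * Real.log L) = Real.log L * -γ by ring,
            ← Real.rpow_def_of_pos hL0]
  rw [Set.setOf_exists]
  refine (measure_iUnion_le _).trans ?_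
  have hPM : ∀ M : ℕ, P {x | 1 ≤ M ∧
          ((1 / (W M : ℝ)) * ∑ i ∈ Finset.Icc 1 (W M),
              (if ∀ j ∈ Finset.Icc (1 : ℕ) M, ω j x ≠ ω (M + i) x then (1 : ℝ) else 0)
            < α - ε
          ∧ (μ {b | ∀ i ∈ Finset.Icc 1 M, ω i x ≠ b}).toReal > α)}
      ≤ ENNReal.ofReal (if M = 0 then (0:ℝ) else ((max Mlow M : ℕ) : ℝ) ^ (-γ)) := by
    intro M
    rcases Nat.eq_zero_or_pos M with rfl | hM
    · have he : {x : Ω | 1 ≤ 0 ∧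
          ((1 / (W 0 : ℝ)) * ∑ i ∈ Finset.Icc 1 (W 0),
              (if ∀ j ∈ Finset.Icc (1 : ℕ) 0, ω j x ≠ ω (0 + i) x then (1 : ℝ) else 0)
            < α - ε
          ∧ (μ {b | ∀ i ∈ Finset.Icc 1 0, ω i x ≠ b}).toReal > α)} = ∅ := by
        ext x
        simp
      rw [he, measure_empty]
      exact zero_le
    · rw [if_neg (Nat.pos_iff_ne_zero.mp hM)]
      have hsub : {x : Ω | 1 ≤ M ∧
          ((1 / (W M : ℝ)) * ∑ i ∈ Finset.Icc 1 (W M),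
              (if ∀ j ∈ Finset.Icc (1 : ℕ) M, ω j x ≠ ω (M + i) x then (1 : ℝ) else 0)
            < α - ε
          ∧ (μ {b | ∀ i ∈ Finset.Icc 1 M, ω i x ≠ b}).toReal > α)}
          ⊆ {x : Ω | (1 / (W M : ℝ)) * ∑ i ∈ Finset.Icc 1 (W M),
              (if ∀ j ∈ Finset.Icc (1 : ℕ) M, ω j x ≠ ω (M + i) x then (1 : ℝ) else 0)
            < α - ε
          ∧ (μ {b | ∀ i ∈ Finset.Icc 1 M, ω i x ≠ b}).toReal > α} :=
        fun x hx => hx.2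
      refine ((measure_mono hsub).trans
        (dm_perM P μ ω hmeas hindep hdist α ε hε M (W M) (hWpos M hM))).trans ?_
      exact ENNReal.ofReal_le_ofReal (hbound M hM)
  refine (ENNReal.tsum_le_tsum hPM).trans ?_
  refine ENNReal.tsum_le_of_sum_range_le ?_
  intro n
  rw [← ENNReal.ofReal_sum_of_nonneg (fun M _ => by
    split
    · exact le_refl 0
    · positivity)]
  refine ENNReal.ofReal_le_ofReal ?_
  cases n with
  | zero => simpa using hδ0.le
  | succ N => exact (dm_partial_sum hγ hMlowN N).trans (dm_final hγ hδ0 hMlow)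
end

section
/- Suppose the system is low-complexity with parameters (α_0, K_0), i.e., there exists a set I* ⊆ B with |I*| ≤ K_0 and μ(I*) > 1 − α_0. Then for every real α > α_0 and every integer M ≥ 1, the probability that the observed mass is insufficient satisfies P( π(O_M) < 1 − α ) ≤ 2^{K_0} · exp(−(α − α_0) M). -/
open MeasureTheory ProbabilityTheory Real

/-- For a low-complexity system with parameters `(α₀, K₀)` (there is a set
`I* ⊆ B` with `|I*| ≤ K₀` and `μ I* > 1 - α₀`), for every `α > α₀` and `M ≥ 1`,
`P(π(O_M) < 1 - α) ≤ 2^K₀ exp (-(α - α₀) M)`. -/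
theorem lowComplexity_observed_mass_bound
    {Ω : Type*} [MeasurableSpace Ω] (P : Measure Ω) [IsProbabilityMeasure P]
    {B : Type*} [Fintype B] [Nonempty B] [DecidableEq B]
    [MeasurableSpace B] [MeasurableSingletonClass B]
    (μ : Measure B) [IsProbabilityMeasure μ]
    (ω : ℕ → Ω → B)
    (hmeas : ∀ i, Measurable (ω i))
    (hindep : iIndepFun ω P)
    (hdist : ∀ i, Measure.map (ω i) P = μ)
    (α₀ : ℝ) (hα₀0 : 0 ≤ α₀) (hα₀1 : α₀ < 1) (K₀ : ℕ) (hK₀ : 1 ≤ K₀)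
    (hlow : ∃ I : Finset B, I.card ≤ K₀ ∧ 1 - α₀ < (μ (I : Set B)).toReal)
    (α : ℝ) (hα : α₀ < α) (M : ℕ) (hM : 1 ≤ M) :
    P {x | (μ {b | ∃ i ∈ Finset.Icc 1 M, ω i x = b}).toReal < 1 - α}
      ≤ ENNReal.ofReal ((2 : ℝ) ^ K₀ * Real.exp (-(α - α₀) * M)) := by
  obtain ⟨I, hIcard, hImass⟩ := hlow
  classical
  set T : Finset (Finset B) :=
    I.powerset.filter (fun S => α - α₀ < (μ (S : Set B)).toReal) with hT
  -- the bad event is contained in the union over S ∈ T of "all samples avoid S"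
  have hsubset : {x | (μ {b | ∃ i ∈ Finset.Icc 1 M, ω i x = b}).toReal < 1 - α}
      ⊆ ⋃ S ∈ T, ⋂ i ∈ Finset.Icc 1 M, (ω i) ⁻¹' ((S : Set B)ᶜ) := by
    intro x hx
    simp only [Set.mem_setOf_eq] at hx
    set O : Set B := {b | ∃ i ∈ Finset.Icc 1 M, ω i x = b} with hO
    set S : Finset B := I.filter (fun b => ∀ i ∈ Finset.Icc 1 M, ω i x ≠ b) with hS
    have hIsub : (I : Set B) ⊆ (S : Set B) ∪ O := by
      intro b hb
      by_cases h : ∀ i ∈ Finset.Icc 1 M, ω i x ≠ b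
      · left; simp only [hS, Finset.coe_filter, Set.mem_setOf_eq]
        exact ⟨hb, h⟩
      · right
        push_neg at h
        obtain ⟨i, hi, hib⟩ := h
        exact ⟨i, hi, hib⟩
    have hmassS : α - α₀ < (μ (S : Set B)).toReal := by
      have h1 : μ (I : Set B) ≤ μ ((S : Set B) ∪ O) := measure_mono hIsub
      have h2 : μ ((S : Set B) ∪ O) ≤ μ (S : Set B) + μ O := measure_union_le _ _
      have h3 : (μ (I : Set B)).toReal ≤ (μ (S : Set B)).toReal + (μ O).toReal := by
        have := (h1.trans h2)
        have h4 : (μ (I : Set B)).toReal ≤ (μ (S : Set B) + μ O).toReal :=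
          ENNReal.toReal_mono (by finiteness) this
        rwa [ENNReal.toReal_add (by finiteness) (by finiteness)] at h4
      linarith
    refine Set.mem_iUnion₂.mpr ⟨S, ?_, ?_⟩
    · simp only [hT, Finset.mem_filter, Finset.mem_powerset]
      refine ⟨fun b hb => ?_, hmassS⟩
      simp only [hS, Finset.mem_filter] at hb
      exact hb.1
    · simp only [Set.mem_iInter, Set.mem_preimage, Set.mem_compl_iff, Finset.mem_coe]
      intro i hi hmem
      simp only [hS, Finset.mem_filter] at hmem
      exact hmem.2 i hi rfl
  refine le_trans (measure_mono hsubset) ?_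
  refine le_trans (measure_biUnion_finset_le T _) ?_
  -- bound each term
  have hterm : ∀ S ∈ T,
      P (⋂ i ∈ Finset.Icc 1 M, (ω i) ⁻¹' ((S : Set B)ᶜ))
        ≤ ENNReal.ofReal (Real.exp (-(α - α₀) * M)) := by
    intro S hSmem
    have hSmass : α - α₀ < (μ (S : Set B)).toReal := by
      simp only [hT, Finset.mem_filter] at hSmem; exact hSmem.2
    have hSc : MeasurableSet ((S : Set B)ᶜ) := (S.measurableSet).compl
    have hprod : P (⋂ i ∈ Finset.Icc 1 M, (ω i) ⁻¹' ((S : Set B)ᶜ))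
        = ∏ i ∈ Finset.Icc 1 M, P ((ω i) ⁻¹' ((S : Set B)ᶜ)) := by
      refine hindep.meas_biInter (fun i _ => ?_)
      exact ⟨(S : Set B)ᶜ, hSc, rfl⟩
    have hPi : ∀ i, P ((ω i) ⁻¹' ((S : Set B)ᶜ)) = μ ((S : Set B)ᶜ) := by
      intro i
      rw [← hdist i, Measure.map_apply (hmeas i) hSc]
    have hμc : μ ((S : Set B)ᶜ) ≤ ENNReal.ofReal (Real.exp (-(α - α₀))) := by
      have hcompl : μ ((S : Set B)ᶜ) = 1 - μ (S : Set B) :=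
        prob_compl_eq_one_sub S.measurableSet
      have htr : (μ ((S : Set B)ᶜ)).toReal = 1 - (μ (S : Set B)).toReal := by
        rw [hcompl, ENNReal.toReal_sub_of_le prob_le_one (by finiteness)]
        simp
      have hle : (μ ((S : Set B)ᶜ)).toReal ≤ Real.exp (-(α - α₀)) := by
        linarith [Real.add_one_le_exp (-(α - α₀))]
      calc μ ((S : Set B)ᶜ) = ENNReal.ofReal ((μ ((S : Set B)ᶜ)).toReal) :=
            (ENNReal.ofReal_toReal (by finiteness)).symm
        _ ≤ ENNReal.ofReal (Real.exp (-(α - α₀))) := ENNReal.ofReal_le_ofReal hle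
    calc P (⋂ i ∈ Finset.Icc 1 M, (ω i) ⁻¹' ((S : Set B)ᶜ))
        = ∏ i ∈ Finset.Icc 1 M, P ((ω i) ⁻¹' ((S : Set B)ᶜ)) := hprod
      _ = (μ ((S : Set B)ᶜ)) ^ M := by
          simp only [hPi, Finset.prod_const, Nat.card_Icc]
          norm_num
      _ ≤ (ENNReal.ofReal (Real.exp (-(α - α₀)))) ^ M := pow_le_pow_left' hμc M
      _ = ENNReal.ofReal (Real.exp (-(α - α₀)) ^ M) := by
          rw [ENNReal.ofReal_pow (Real.exp_nonneg _)]
      _ = ENNReal.ofReal (Real.exp (-(α - α₀) * M)) := by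
          rw [← Real.exp_nat_mul, mul_comm]
  refine le_trans (Finset.sum_le_card_nsmul T _ _ hterm) ?_
  have hcardT : T.card ≤ 2 ^ K₀ := by
    calc T.card ≤ I.powerset.card := Finset.card_filter_le _ _
      _ = 2 ^ I.card := Finset.card_powerset I
      _ ≤ 2 ^ K₀ := Nat.pow_le_pow_right (by norm_num) hIcard
  calc T.card • ENNReal.ofReal (Real.exp (-(α - α₀) * M))
      = (T.card : ENNReal) * ENNReal.ofReal (Real.exp (-(α - α₀) * M)) := by
        simp [nsmul_eq_mul]
    _ ≤ ((2 ^ K₀ : ℕ) : ENNReal) * ENNReal.ofReal (Real.exp (-(α - α₀) * M)) := by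
        exact mul_le_mul_left (by exact_mod_cast hcardT) _
    _ = ENNReal.ofReal ((2 : ℝ) ^ K₀ * Real.exp (-(α - α₀) * M)) := by
        rw [ENNReal.ofReal_mul (by positivity), ENNReal.ofReal_pow (by norm_num : (0:ℝ) ≤ 2),
          ENNReal.ofReal_ofNat]
        push_cast
        ring
end

section
/- Suppose the system is low-complexity with parameters (α_0, K_0), let α > α_0, let δ_0 ∈ (0, 1), and let M be any integer with M ≥ (K_0 · log 2 + log(1/δ_0)) / (α − α_0). Then with probability at least 1 − δ_0 the observed active sets after M samples contain mass at least 1 − α, i.e., P( π(O_M) ≥ 1 − α ) ≥ 1 − δ_0. -/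
open MeasureTheory ProbabilityTheory Real

/-- For a low-complexity system with parameters `(α₀, K₀)`, if `α > α₀`,
`δ₀ ∈ (0,1)` and `M ≥ (K₀ log 2 + log (1/δ₀)) / (α - α₀)`, then with probability at least
`1 - δ₀` the observed mass after `M` samples is at least `1 - α`. -/
theorem lowComplexity_sample_complexity
    {Ω : Type*} [MeasurableSpace Ω] (P : Measure Ω) [IsProbabilityMeasure P]
    {B : Type*} [Fintype B] [Nonempty B] [DecidableEq B]
    [MeasurableSpace B] [MeasurableSingletonClass B]
    (μ : Measure B) [IsProbabilityMeasure μ]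
    (ω : ℕ → Ω → B)
    (hmeas : ∀ i, Measurable (ω i))
    (hindep : iIndepFun ω P)
    (hdist : ∀ i, Measure.map (ω i) P = μ)
    (α₀ : ℝ) (hα₀0 : 0 ≤ α₀) (hα₀1 : α₀ < 1) (K₀ : ℕ) (hK₀ : 1 ≤ K₀)
    (hlow : ∃ I : Finset B, I.card ≤ K₀ ∧ 1 - α₀ < (μ (I : Set B)).toReal)
    (α : ℝ) (hα : α₀ < α) (δ₀ : ℝ) (hδ₀0 : 0 < δ₀) (hδ₀1 : δ₀ < 1)
    (M : ℕ) (hM₁ : 1 ≤ M)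
    (hM : ((K₀ : ℝ) * Real.log 2 + Real.log (1 / δ₀)) / (α - α₀) ≤ (M : ℝ)) :
    1 - ENNReal.ofReal δ₀
      ≤ P {x | 1 - α ≤ (μ {b | ∃ i ∈ Finset.Icc 1 M, ω i x = b}).toReal} := by
  obtain ⟨I, hIcard, hImass⟩ := hlow
  set ε : ℝ := α - α₀ with hε
  have hε0 : 0 < ε := sub_pos.2 hα
  set G : Set Ω := {x | 1 - α ≤ (μ {b | ∃ i ∈ Finset.Icc 1 M, ω i x = b}).toReal} with hG
  -- bad subsets
  classical
  set bad : Finset (Finset B) := I.powerset.filter (fun S => ε < (μ (S : Set B)).toReal)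
    with hbad
  -- events
  set E : Finset B → Set Ω := fun S => ⋂ i ∈ Finset.Icc 1 M, (ω i) ⁻¹' ((S : Set B)ᶜ)
    with hE
  -- key: Gᶜ ⊆ union of bad events
  have hsub : Gᶜ ⊆ ⋃ S ∈ bad, E S := by
    intro x hx
    simp only [hG, Set.mem_compl_iff, Set.mem_setOf_eq, not_le] at hx
    set O : Set B := {b | ∃ i ∈ Finset.Icc 1 M, ω i x = b} with hO
    set S : Finset B := I.filter (fun b => b ∉ O) with hS
    have hSsub : (S : Set B) ⊆ (I : Set B) \ O := by
      intro b hb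
      simp only [hS, Finset.coe_filter, Set.mem_setOf_eq] at hb
      exact ⟨hb.1, hb.2⟩
    have hSsub' : (I : Set B) \ O ⊆ (S : Set B) := by
      intro b hb
      simp only [hS, Finset.coe_filter, Set.mem_setOf_eq]
      exact ⟨hb.1, hb.2⟩
    have hScoe : (S : Set B) = (I : Set B) \ O := Set.Subset.antisymm hSsub hSsub'
    have hmassS : ε < (μ (S : Set B)).toReal := by
      have hIle : μ (I : Set B) ≤ μ ((I : Set B) \ O) + μ O := by
        refine le_trans (measure_mono ?_) (measure_union_le _ _)
        intro b hb
        by_cases hbO : b ∈ O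
        · exact Or.inr hbO
        · exact Or.inl ⟨hb, hbO⟩
      have h1 : (μ (I : Set B)).toReal ≤ (μ ((I : Set B) \ O)).toReal + (μ O).toReal := by
        have := ENNReal.toReal_mono (by finiteness) hIle
        rwa [ENNReal.toReal_add (by finiteness) (by finiteness)] at this
      rw [hScoe]
      have : 1 - α₀ - (1 - α) < (μ ((I : Set B) \ O)).toReal := by
        have := hx; nlinarith [hImass, hx, h1]
      linarith [this]
    have hSbad : S ∈ bad := by
      simp only [hbad, Finset.mem_filter, Finset.mem_powerset]
      exact ⟨Finset.filter_subset _ _, hmassS⟩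
    refine Set.mem_biUnion hSbad ?_
    simp only [hE, Set.mem_iInter, Set.mem_preimage, Set.mem_compl_iff]
    intro i hi hmem
    simp only [hS, Finset.coe_filter, Set.mem_setOf_eq] at hmem
    exact hmem.2 ⟨i, hi, rfl⟩
  -- probability of each bad event
  have hEbound : ∀ S ∈ bad, P (E S) ≤ ENNReal.ofReal (Real.exp (-(ε * M))) := by
    intro S hSbad
    simp only [hbad, Finset.mem_filter, Finset.mem_powerset] at hSbad
    have hmeasS : MeasurableSet ((S : Set B)ᶜ) := ((Set.toFinite (S : Set B)).measurableSet).compl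
    have hPE : P (E S) = (μ ((S : Set B)ᶜ)) ^ M := by
      rw [hE]
      rw [hindep.meas_biInter (fun i _ => ⟨(S : Set B)ᶜ, hmeasS, rfl⟩)]
      have : ∀ i, P ((ω i) ⁻¹' ((S : Set B)ᶜ)) = μ ((S : Set B)ᶜ) := by
        intro i
        rw [← hdist i, Measure.map_apply (hmeas i) hmeasS]
      simp only [this, Finset.prod_const, Nat.card_Icc]
      norm_num
    rw [hPE]
    have hμS1 : μ (S : Set B) ≤ 1 := prob_le_one
    have htR : (μ ((S : Set B)ᶜ)).toReal = 1 - (μ (S : Set B)).toReal := by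
      rw [measure_compl ((Set.toFinite (S : Set B)).measurableSet) (by finiteness), measure_univ,
        ENNReal.toReal_sub_of_le hμS1 (by finiteness)]
      simp
    have hle1 : 1 - (μ (S : Set B)).toReal ≤ Real.exp (-ε) := by
      have h1 : 1 - (μ (S : Set B)).toReal ≤ Real.exp (-(μ (S : Set B)).toReal) := by
        linarith [Real.add_one_le_exp (-(μ (S : Set B)).toReal)]
      refine h1.trans (Real.exp_le_exp.2 ?_)
      linarith [hSbad.2]
    have h0 : 0 ≤ 1 - (μ (S : Set B)).toReal := by
      have := ENNReal.toReal_mono (by finiteness) hμS1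
      simpa using this
    have : ((μ ((S : Set B)ᶜ)) ^ M).toReal ≤ Real.exp (-(ε * M)) := by
      rw [ENNReal.toReal_pow, htR]
      calc (1 - (μ (S : Set B)).toReal) ^ M ≤ (Real.exp (-ε)) ^ M :=
            pow_le_pow_left₀ h0 hle1 M
        _ = Real.exp (-(ε * M)) := by
            rw [← Real.exp_nat_mul]; ring_nf
    calc (μ ((S : Set B)ᶜ)) ^ M
        = ENNReal.ofReal (((μ ((S : Set B)ᶜ)) ^ M).toReal) := by
          rw [ENNReal.ofReal_toReal (ENNReal.pow_ne_top (measure_ne_top μ _))]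
      _ ≤ ENNReal.ofReal (Real.exp (-(ε * M))) := ENNReal.ofReal_le_ofReal this
  -- total bound
  have hcard : (bad.card : ℝ) ≤ 2 ^ K₀ := by
    have h1 : bad.card ≤ I.powerset.card := Finset.card_le_card (Finset.filter_subset _ _)
    have h2 : I.powerset.card = 2 ^ I.card := Finset.card_powerset I
    have : bad.card ≤ 2 ^ K₀ := by
      calc bad.card ≤ 2 ^ I.card := h2 ▸ h1
        _ ≤ 2 ^ K₀ := Nat.pow_le_pow_right (by norm_num) hIcard
    exact_mod_cast this
  have hexp : (2 : ℝ) ^ K₀ * Real.exp (-(ε * M)) ≤ δ₀ := by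
    have hεM : (K₀ : ℝ) * Real.log 2 + Real.log (1 / δ₀) ≤ ε * M := by
      rw [div_le_iff₀ hε0] at hM; linarith [hM]
    have hmono : Real.exp (-(ε * M)) ≤ Real.exp (-((K₀ : ℝ) * Real.log 2 + Real.log (1 / δ₀))) :=
      Real.exp_le_exp.2 (by linarith)
    have heq : Real.exp (-((K₀ : ℝ) * Real.log 2 + Real.log (1 / δ₀))) = δ₀ / 2 ^ K₀ := by
      rw [neg_add, Real.exp_add, one_div, Real.log_inv, neg_neg, Real.exp_log hδ₀0,
        Real.exp_neg, Real.exp_nat_mul, Real.exp_log (by norm_num : (0:ℝ) < 2)]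
      ring
    have h2ne : ((2 : ℝ) ^ K₀) ≠ 0 := by positivity
    calc (2 : ℝ) ^ K₀ * Real.exp (-(ε * M))
        ≤ (2 : ℝ) ^ K₀ * (δ₀ / 2 ^ K₀) :=
          mul_le_mul_of_nonneg_left (hmono.trans_eq heq) (by positivity)
      _ = δ₀ := by field_simp
  have hPGc : P Gᶜ ≤ ENNReal.ofReal δ₀ := by
    calc P Gᶜ ≤ P (⋃ S ∈ bad, E S) := measure_mono hsub
      _ ≤ ∑ S ∈ bad, P (E S) := measure_biUnion_finset_le bad E
      _ ≤ ∑ s ∈ bad, ENNReal.ofReal (Real.exp (-(ε * M))) := Finset.sum_le_sum hEbound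
      _ = (bad.card : ENNReal) * ENNReal.ofReal (Real.exp (-(ε * M))) := by
          rw [Finset.sum_const, nsmul_eq_mul]
      _ = ENNReal.ofReal ((bad.card : ℝ) * Real.exp (-(ε * M))) := by
          rw [ENNReal.ofReal_mul (by positivity)]
          simp
      _ ≤ ENNReal.ofReal δ₀ := by
          refine ENNReal.ofReal_le_ofReal ?_
          calc (bad.card : ℝ) * Real.exp (-(ε * M))
              ≤ 2 ^ K₀ * Real.exp (-(ε * M)) :=
                mul_le_mul_of_nonneg_right hcard (Real.exp_nonneg _)
            _ ≤ δ₀ := hexp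
  -- conclude
  have h1 : (1 : ENNReal) ≤ P G + P Gᶜ := by
    rw [← measure_univ (μ := P), ← Set.union_compl_self G]
    exact measure_union_le _ _
  have : (1 : ENNReal) ≤ P G + ENNReal.ofReal δ₀ := h1.trans (add_le_add_right hPGc _)
  exact tsub_le_iff_right.2 this
end
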